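/- arXiv:1710.02057 — 4 statements merged into one kernel-verified Lean document; each statement's English description precedes it below -/
import Mathlib

section
/- For every permutation σ of the set {1,…,n}, the inequality ℓ(σ) + c(σ) ≥ n holds, where ℓ(σ) is the number of inversions of σ and c(σ) is the number of orbits of σ. Moreover, equality ℓ(σ) + c(σ) = n holds if and only if σ is a product of pairwise distinct simple transpositions. -/
/-- The number of inversions (the length) of a permutation of `{1,…,n}`. -/
def invCount {n : ℕ} (σ : Equiv.Perm (Fin n)) : ℕ :=
  (Finset.univ.filter fun p : Fin n × Fin n => p.1 < p.2 ∧ σ p.2 < σ p.1).card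

/-- The number of orbits of `{1,…,n}` under the cyclic group generated by `σ`. -/
noncomputable def orbitCount {n : ℕ} (σ : Equiv.Perm (Fin n)) : ℕ :=
  Nat.card (MulAction.orbitRel.Quotient (Subgroup.zpowers σ) (Fin n))

/-- A simple transposition: a swap of two consecutive integers `i` and `i+1`. -/
def IsSimpleTransposition {n : ℕ} (τ : Equiv.Perm (Fin n)) : Prop :=
  ∃ (i : ℕ) (h : i + 1 < n), τ = Equiv.swap ⟨i, Nat.lt_of_succ_lt h⟩ ⟨i + 1, h⟩

/-- `σ` is the product of a (possibly empty) list of pairwise distinct simple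
transpositions. -/
def IsProdOfDistinctSimpleTranspositions {n : ℕ} (σ : Equiv.Perm (Fin n)) : Prop :=
  ∃ l : List (Equiv.Perm (Fin n)),
    l.Nodup ∧ (∀ τ ∈ l, IsSimpleTransposition τ) ∧ σ = l.prod


open Equiv Equiv.Perm Finset

variable {n : ℕ}

/-- membership in a forward-invariant set is preserved by integer powers -/
lemma aux_zpow_mem {τ : Equiv.Perm (Fin n)} {s : Set (Fin n)}
    (hs : ∀ x ∈ s, τ x ∈ s) {x : Fin n} (hx : x ∈ s) (i : ℤ) : (τ ^ i) x ∈ s := by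
  have hnat : ∀ k : ℕ, (τ ^ k) x ∈ s := by
    intro k
    induction k with
    | zero => simpa using hx
    | succ k ih => rw [pow_succ']; exact hs _ ih
  have hord : (0:ℤ) < (orderOf τ : ℤ) := by
    exact_mod_cast orderOf_pos τ
  have : τ ^ i = τ ^ ((i % (orderOf τ : ℤ)).toNat) := by
    rw [← zpow_natCast, Int.toNat_of_nonneg (Int.emod_nonneg _ (ne_of_gt hord)),
      zpow_mod_orderOf]
  rw [this]; exact hnat _

lemma aux_sameCycle_mem {τ : Equiv.Perm (Fin n)} {s : Set (Fin n)}
    (hs : ∀ x ∈ s, τ x ∈ s) {x y : Fin n} (hx : x ∈ s) (h : τ.SameCycle x y) : y ∈ s := by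
  obtain ⟨i, rfl⟩ := h
  exact aux_zpow_mem hs hx i

noncomputable def minReps (σ : Equiv.Perm (Fin n)) : Finset (Fin n) :=
  @Finset.filter _ (fun x => ∀ y, σ.SameCycle x y → x ≤ y) (Classical.decPred _) Finset.univ

lemma mem_minReps {σ : Equiv.Perm (Fin n)} {x : Fin n} :
    x ∈ minReps σ ↔ ∀ y, σ.SameCycle x y → x ≤ y := by
  simp [minReps]

lemma minReps_one : minReps (1 : Equiv.Perm (Fin n)) = Finset.univ := by
  ext x; simp [mem_minReps]

lemma minReps_inv (σ : Equiv.Perm (Fin n)) : minReps σ⁻¹ = minReps σ := by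
  ext x; simp [mem_minReps]

lemma orbitCount_eq (σ : Equiv.Perm (Fin n)) : orbitCount σ = (minReps σ).card := by
  classical
  have key : ∀ x y : Fin n,
      Setoid.r (self := MulAction.orbitRel (Subgroup.zpowers σ) (Fin n)) x y ↔
        σ.SameCycle y x := by
    intro x y
    rw [MulAction.orbitRel_apply, MulAction.mem_orbit_iff]
    constructor
    · rintro ⟨⟨g, i, rfl⟩, hg⟩
      exact ⟨i, hg⟩
    · rintro ⟨i, hi⟩
      exact ⟨⟨σ ^ i, i, rfl⟩, hi⟩
  set e : minReps σ → MulAction.orbitRel.Quotient (Subgroup.zpowers σ) (Fin n) :=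
    fun x => Quotient.mk'' x.1 with he
  have hbij : Function.Bijective e := by
    constructor
    · rintro ⟨x, hx⟩ ⟨y, hy⟩ hxy
      have h := Quotient.eq''.mp hxy
      rw [key] at h
      have h1 := (mem_minReps.mp hx) y h.symm
      have h2 := (mem_minReps.mp hy) x h
      exact Subtype.ext (le_antisymm h1 h2)
    · intro q
      induction q using Quotient.inductionOn' with
      | h y =>
        set s : Finset (Fin n) := Finset.univ.filter (fun z => σ.SameCycle y z) with hs
        have hne : s.Nonempty := ⟨y, by simp [hs, Equiv.Perm.SameCycle.refl]⟩
        set x := s.min' hne with hxdef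
        have hxy : σ.SameCycle y x := by
          have h := s.min'_mem hne
          simp only [hs, Finset.mem_filter] at h
          exact h.2
        refine ⟨⟨x, ?_⟩, ?_⟩
        · rw [mem_minReps]
          intro z hz
          exact s.min'_le z (by rw [hs, Finset.mem_filter]; exact ⟨Finset.mem_univ _, hxy.trans hz⟩)
        · exact Quotient.sound' ((key x y).mpr hxy)
  have : Nat.card (MulAction.orbitRel.Quotient (Subgroup.zpowers σ) (Fin n)) =
      Nat.card (minReps σ) := (Nat.card_congr (Equiv.ofBijective e hbij)).symm
  rw [orbitCount, this, Nat.card_eq_finsetCard]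


section Merge

variable {n : ℕ} {σ : Equiv.Perm (Fin n)} {a b : Fin n}

lemma sameCycle_pow_nat (σ : Equiv.Perm (Fin n)) (x : Fin n) (j : ℕ) :
    σ.SameCycle x ((σ ^ j) x) := ⟨(j : ℤ), by rw [zpow_natCast]⟩

lemma sameCycle_apply_right' (σ : Equiv.Perm (Fin n)) (x : Fin n) :
    σ.SameCycle x (σ x) := ⟨1, by rw [zpow_one]⟩

lemma merge_sameCycle_ab (hab : a ≠ b) (h : ¬σ.SameCycle a b) :
    (σ * Equiv.swap a b).SameCycle a b := by
  set τ := σ * Equiv.swap a b with hτ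
  set m := Function.minimalPeriod σ b with hm
  have hper : Function.IsPeriodicPt σ (orderOf σ) b := by
    have h1 : σ ^ (orderOf σ) = 1 := pow_orderOf_eq_one σ
    show (⇑σ)^[orderOf σ] b = b
    rw [← Equiv.Perm.coe_pow, h1]; rfl
  have hmpos : 0 < m := hper.minimalPeriod_pos (orderOf_pos σ)
  have hmb : (σ ^ m) b = b := by
    show (⇑(σ ^ m)) b = b
    rw [Equiv.Perm.coe_pow]
    exact Function.iterate_minimalPeriod
  have hmin : ∀ j, 0 < j → j < m → (σ ^ j) b ≠ b := by
    intro j hj hjm hc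
    have : Function.IsPeriodicPt σ j b := by
      show (⇑σ)^[j] b = b
      rw [← Equiv.Perm.coe_pow]; exact hc
    exact absurd (this.minimalPeriod_le hj) (not_le.mpr hjm)
  have hab' : ∀ j : ℕ, (σ ^ j) b ≠ a := by
    intro j hc
    exact h (Equiv.Perm.SameCycle.symm ⟨(j : ℤ), by rw [zpow_natCast]; exact hc⟩)
  have key : ∀ j, 1 ≤ j → j ≤ m → (τ ^ j) a = (σ ^ j) b := by
    intro j hj
    induction j, hj using Nat.le_induction with
    | base =>
      intro _
      rw [pow_one, pow_one]
      show σ (Equiv.swap a b a) = σ b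
      rw [Equiv.swap_apply_left]
    | succ j hj ih =>
      intro hjm
      have hjm' : j < m := Nat.lt_of_succ_le hjm
      have ihv := ih (le_of_lt hjm')
      rw [pow_succ', Equiv.Perm.mul_apply, ihv]
      show τ ((σ ^ j) b) = (σ ^ (j+1)) b
      have h1 : (σ ^ j) b ≠ a := hab' j
      have h2 : (σ ^ j) b ≠ b := hmin j hj hjm'
      show σ (Equiv.swap a b ((σ ^ j) b)) = _
      rw [Equiv.swap_apply_of_ne_of_ne h1 h2, pow_succ', Equiv.Perm.mul_apply]
  exact ⟨(m : ℤ), by rw [zpow_natCast, key m hmpos le_rfl, hmb]⟩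

lemma merge_mono (hab : a ≠ b) (h : ¬σ.SameCycle a b) {x y : Fin n}
    (hxy : σ.SameCycle x y) : (σ * Equiv.swap a b).SameCycle x y := by
  set τ := σ * Equiv.swap a b with hτ
  have hstep : ∀ z : Fin n, τ.SameCycle z (σ z) := by
    intro z
    rcases eq_or_ne z a with rfl | hza
    · have hτb : τ b = σ z := by
        show σ (Equiv.swap z b b) = σ z; rw [Equiv.swap_apply_right]
      exact (merge_sameCycle_ab hab h).trans ⟨1, by rw [zpow_one]; exact hτb⟩
    rcases eq_or_ne z b with rfl | hzb
    · have hτa : τ a = σ z := by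
        show σ (Equiv.swap a z a) = σ z; rw [Equiv.swap_apply_left]
      exact (merge_sameCycle_ab hab h).symm.trans ⟨1, by rw [zpow_one]; exact hτa⟩
    · exact ⟨1, by
        rw [zpow_one]
        show σ (Equiv.swap a b z) = σ z
        rw [Equiv.swap_apply_of_ne_of_ne hza hzb]⟩
  have hs : ∀ w ∈ {w : Fin n | τ.SameCycle x w}, σ w ∈ {w : Fin n | τ.SameCycle x w} :=
    fun w hw => hw.trans (hstep w)
  exact aux_sameCycle_mem hs (Equiv.Perm.SameCycle.refl τ x) hxy

lemma off_orbit_sameCycle {x y : Fin n} (hx_a : ¬σ.SameCycle x a) (hx_b : ¬σ.SameCycle x b)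
    (h : (σ * Equiv.swap a b).SameCycle x y) : σ.SameCycle x y := by
  have hs : ∀ w ∈ {w : Fin n | σ.SameCycle x w},
      (σ * Equiv.swap a b) w ∈ {w : Fin n | σ.SameCycle x w} := by
    intro w hw
    have hwa : w ≠ a := fun hc => hx_a (hc ▸ hw)
    have hwb : w ≠ b := fun hc => hx_b (hc ▸ hw)
    have : (σ * Equiv.swap a b) w = σ w := by
      show σ (Equiv.swap a b w) = σ w
      rw [Equiv.swap_apply_of_ne_of_ne hwa hwb]
    rw [this]
    exact hw.trans (sameCycle_apply_right' σ w)
  exact aux_sameCycle_mem hs (Equiv.Perm.SameCycle.refl σ x) h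

lemma orbitO_invariant {x y : Fin n} (hx : σ.SameCycle a x ∨ σ.SameCycle b x)
    (h : (σ * Equiv.swap a b).SameCycle x y) : σ.SameCycle a y ∨ σ.SameCycle b y := by
  have hs : ∀ w ∈ {w : Fin n | σ.SameCycle a w ∨ σ.SameCycle b w},
      (σ * Equiv.swap a b) w ∈ {w : Fin n | σ.SameCycle a w ∨ σ.SameCycle b w} := by
    intro w hw
    rcases eq_or_ne w a with rfl | hwa
    · have : (σ * Equiv.swap w b) w = σ b := by
        show σ (Equiv.swap w b w) = σ b; rw [Equiv.swap_apply_left]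
      rw [this]
      exact Or.inr (sameCycle_apply_right' σ b)
    rcases eq_or_ne w b with rfl | hwb
    · have : (σ * Equiv.swap a w) w = σ a := by
        show σ (Equiv.swap a w w) = σ a; rw [Equiv.swap_apply_right]
      rw [this]
      exact Or.inl (sameCycle_apply_right' σ a)
    · have : (σ * Equiv.swap a b) w = σ w := by
        show σ (Equiv.swap a b w) = σ w
        rw [Equiv.swap_apply_of_ne_of_ne hwa hwb]
      rw [this]
      rcases hw with hw | hw
      · exact Or.inl (hw.trans (sameCycle_apply_right' σ w))
      · exact Or.inr (hw.trans (sameCycle_apply_right' σ w))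
  exact aux_sameCycle_mem hs hx h

lemma inO_sameCycle (hab : a ≠ b) (h : ¬σ.SameCycle a b) {x y : Fin n}
    (hx : σ.SameCycle a x ∨ σ.SameCycle b x) (hy : σ.SameCycle a y ∨ σ.SameCycle b y) :
    (σ * Equiv.swap a b).SameCycle x y := by
  have hab2 := merge_sameCycle_ab hab h
  have hax : (σ * Equiv.swap a b).SameCycle a x := by
    rcases hx with hx | hx
    · exact merge_mono hab h hx
    · exact hab2.trans (merge_mono hab h hx)
  have hay : (σ * Equiv.swap a b).SameCycle a y := by
    rcases hy with hy | hy
    · exact merge_mono hab h hy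
    · exact hab2.trans (merge_mono hab h hy)
  exact hax.symm.trans hay

end Merge
section MergeCount

variable {n : ℕ} {σ : Equiv.Perm (Fin n)} {a b : Fin n}

lemma card_merge (hab : a ≠ b) (h : ¬σ.SameCycle a b) :
    (minReps σ).card = (minReps (σ * Equiv.swap a b)).card + 1 := by
  classical
  set τ := σ * Equiv.swap a b with hτ
  set sa : Finset (Fin n) := Finset.univ.filter (fun z => σ.SameCycle a z) with hsa
  set sb : Finset (Fin n) := Finset.univ.filter (fun z => σ.SameCycle b z) with hsb
  have hnea : sa.Nonempty := ⟨a, by simp [hsa, Equiv.Perm.SameCycle.refl]⟩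
  have hneb : sb.Nonempty := ⟨b, by simp [hsb, Equiv.Perm.SameCycle.refl]⟩
  set ma := sa.min' hnea with hmadef
  set mb := sb.min' hneb with hmbdef
  have hma1 : σ.SameCycle a ma := by
    have h1 := sa.min'_mem hnea
    simp only [hsa, Finset.mem_filter] at h1
    exact h1.2
  have hmb1 : σ.SameCycle b mb := by
    have h1 := sb.min'_mem hneb
    simp only [hsb, Finset.mem_filter] at h1
    exact h1.2
  have hma2 : ∀ z, σ.SameCycle a z → ma ≤ z := by
    intro z hz
    exact sa.min'_le z (by simp only [hsa, Finset.mem_filter]; exact ⟨Finset.mem_univ _, hz⟩)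
  have hmb2 : ∀ z, σ.SameCycle b z → mb ≤ z := by
    intro z hz
    exact sb.min'_le z (by simp only [hsb, Finset.mem_filter]; exact ⟨Finset.mem_univ _, hz⟩)
  have hmamb : ma ≠ mb := by
    intro hc
    exact h (hma1.trans (show σ.SameCycle ma b by rw [hc]; exact hmb1.symm))
  have hminO : ∀ x, (σ.SameCycle a x ∨ σ.SameCycle b x) →
      (x ∈ minReps σ ↔ (x = ma ∨ x = mb)) := by
    intro x hx
    constructor
    · intro hmem
      rw [mem_minReps] at hmem
      rcases hx with hx | hx
      · exact Or.inl (le_antisymm (hmem ma (hx.symm.trans hma1)) (hma2 x hx))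
      · exact Or.inr (le_antisymm (hmem mb (hx.symm.trans hmb1)) (hmb2 x hx))
    · rintro (rfl | rfl)
      · exact mem_minReps.mpr (fun y hy => hma2 y (hma1.trans hy))
      · exact mem_minReps.mpr (fun y hy => hmb2 y (hmb1.trans hy))
  have hmaO : σ.SameCycle a ma ∨ σ.SameCycle b ma := Or.inl hma1
  have hmbO : σ.SameCycle a mb ∨ σ.SameCycle b mb := Or.inr hmb1
  have hmaxO : σ.SameCycle a (max ma mb) ∨ σ.SameCycle b (max ma mb) := by
    rcases max_cases ma mb with ⟨he, -⟩ | ⟨he, -⟩ <;> rw [he]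
    · exact hmaO
    · exact hmbO
  have hext : minReps τ = (minReps σ).erase (max ma mb) := by
    ext x
    rw [mem_minReps, Finset.mem_erase]
    by_cases hx : σ.SameCycle a x ∨ σ.SameCycle b x
    · constructor
      · intro hmem
        have hxma : x ≤ ma := hmem ma (inO_sameCycle hab h hx hmaO)
        have hxmb : x ≤ mb := hmem mb (inO_sameCycle hab h hx hmbO)
        have hxmin : x = min ma mb := by
          rcases hx with hx2 | hx2
          · have : x = ma := le_antisymm hxma (hma2 x hx2)
            rw [this, min_eq_left (this ▸ hxmb)]
          · have : x = mb := le_antisymm hxmb (hmb2 x hx2)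
            rw [this, min_eq_right (this ▸ hxma)]
        have hminmax : min ma mb ≠ max ma mb := by
          rcases le_total ma mb with hle | hle
          · rw [min_eq_left hle, max_eq_right hle]; exact hmamb
          · rw [min_eq_right hle, max_eq_left hle]; exact fun hc => hmamb hc.symm
        refine ⟨hxmin ▸ hminmax, ?_⟩
        rw [hminO x hx, hxmin]
        rcases le_total ma mb with hle | hle
        · rw [min_eq_left hle]; exact Or.inl rfl
        · rw [min_eq_right hle]; exact Or.inr rfl
      · rintro ⟨hxw, hmem⟩
        have hxm : x = min ma mb := by
          rcases (hminO x hx).mp hmem with rfl | rfl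
          · rcases le_total ma mb with hle | hle
            · rw [min_eq_left hle]
            · rw [max_eq_left hle] at hxw
              exact absurd rfl hxw
          · rcases le_total ma mb with hle | hle
            · rw [max_eq_right hle] at hxw
              exact absurd rfl hxw
            · rw [min_eq_right hle]
        intro y hy
        have hyO : σ.SameCycle a y ∨ σ.SameCycle b y := orbitO_invariant hx hy
        rcases hyO with hy2 | hy2
        · exact le_trans (hxm ▸ min_le_left ma mb) (hma2 y hy2)
        · exact le_trans (hxm ▸ min_le_right ma mb) (hmb2 y hy2)
    · push_neg at hx
      have hxa : ¬σ.SameCycle x a := fun hc => hx.1 hc.symm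
      have hxb : ¬σ.SameCycle x b := fun hc => hx.2 hc.symm
      have hne : x ≠ max ma mb := by
        intro hc
        rcases hmaxO with h2 | h2
        · exact hx.1 (hc ▸ h2)
        · exact hx.2 (hc ▸ h2)
      constructor
      · intro hmem
        exact ⟨hne, mem_minReps.mpr (fun y hy => hmem y (merge_mono hab h hy))⟩
      · rintro ⟨-, hmem⟩
        intro y hy
        exact mem_minReps.mp hmem y (off_orbit_sameCycle hxa hxb hy)
  have hwmem : max ma mb ∈ minReps σ := by
    rw [hminO _ hmaxO]
    rcases max_cases ma mb with ⟨he, -⟩ | ⟨he, -⟩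
    · exact Or.inl he
    · exact Or.inr he
  have hpos : 0 < (minReps σ).card := Finset.card_pos.mpr ⟨_, hwmem⟩
  rw [hext, Finset.card_erase_of_mem hwmem]
  omega

end MergeCount
section Split

variable {n : ℕ} {σ : Equiv.Perm (Fin n)} {a b : Fin n}

lemma split_not_sameCycle (hab : a ≠ b) (h : σ.SameCycle a b) :
    ¬(σ * Equiv.swap a b).SameCycle a b := by
  set τ := σ * Equiv.swap a b with hτ
  set m := Function.minimalPeriod σ a with hm
  have hper : Function.IsPeriodicPt σ (orderOf σ) a := by
    have h1 : σ ^ (orderOf σ) = 1 := pow_orderOf_eq_one σ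
    show (⇑σ)^[orderOf σ] a = a
    rw [← Equiv.Perm.coe_pow, h1]; rfl
  have hmpos : 0 < m := hper.minimalPeriod_pos (orderOf_pos σ)
  have hma : (σ ^ m) a = a := by
    show (⇑(σ ^ m)) a = a
    rw [Equiv.Perm.coe_pow]
    exact Function.iterate_minimalPeriod
  have hmin : ∀ j, 0 < j → j < m → (σ ^ j) a ≠ a := by
    intro j hj hjm hc
    have : Function.IsPeriodicPt σ j a := by
      show (⇑σ)^[j] a = a
      rw [← Equiv.Perm.coe_pow]; exact hc
    exact absurd (this.minimalPeriod_le hj) (not_le.mpr hjm)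
  obtain ⟨i, hi, hik⟩ := h.exists_pow_eq'
  set k := i % m with hk
  have hk1 : (σ ^ k) a = b := by
    show (⇑(σ ^ k)) a = b
    rw [Equiv.Perm.coe_pow, hk, Function.iterate_mod_minimalPeriod_eq,
      ← Equiv.Perm.coe_pow]
    exact hik
  have hk0 : k ≠ 0 := by
    intro hc
    rw [hc, pow_zero] at hk1
    exact hab hk1
  have hkm : k < m := Nat.mod_lt _ hmpos
  set S : Set (Fin n) := (fun j => (σ ^ j) a) '' (Set.Ioc k m) with hS
  have haS : a ∈ S := ⟨m, ⟨hkm, le_rfl⟩, hma⟩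
  have hdiff : ∀ j, k < j → j ≤ m → (σ ^ j) a ≠ b := by
    intro j hj1 hj2 hc
    have h1 : (σ ^ (j - k)) ((σ ^ k) a) = (σ ^ k) a := by
      rw [← Equiv.Perm.mul_apply, ← pow_add, Nat.sub_add_cancel (le_of_lt hj1), hc, hk1]
    have hjk : k + (j - k) = j := by omega
    have h2 : (σ ^ k) ((σ ^ (j - k)) a) = (σ ^ k) a := by
      rw [← Equiv.Perm.mul_apply, ← pow_add, hjk, hc, hk1]
    have h3 : (σ ^ (j - k)) a = a := (σ ^ k).injective h2
    exact hmin (j - k) (by omega) (by omega) h3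
  have hbS : b ∉ S := by
    rintro ⟨j, ⟨hj1, hj2⟩, hj3⟩
    exact hdiff j hj1 hj2 hj3
  have hclosed : ∀ x ∈ S, τ x ∈ S := by
    rintro x ⟨j, ⟨hj1, hj2⟩, rfl⟩
    by_cases hjm : j = m
    · have heq : τ ((σ ^ j) a) = (σ ^ (k + 1)) a := by
        rw [hjm, hma]
        show σ (Equiv.swap a b a) = _
        rw [Equiv.swap_apply_left, ← hk1, ← Equiv.Perm.mul_apply, ← pow_succ']
      rw [heq]
      exact ⟨k + 1, ⟨by omega, by omega⟩, rfl⟩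
    · have hja : (σ ^ j) a ≠ a := hmin j (by omega) (by omega)
      have hjb : (σ ^ j) a ≠ b := hdiff j hj1 hj2
      have heq : τ ((σ ^ j) a) = (σ ^ (j + 1)) a := by
        show σ (Equiv.swap a b ((σ ^ j) a)) = _
        rw [Equiv.swap_apply_of_ne_of_ne hja hjb, ← Equiv.Perm.mul_apply, ← pow_succ']
      rw [heq]
      exact ⟨j + 1, ⟨by omega, by omega⟩, rfl⟩
  intro hc
  exact hbS (aux_sameCycle_mem hclosed haS hc)

lemma card_split (hab : a ≠ b) (h : σ.SameCycle a b) :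
    (minReps (σ * Equiv.swap a b)).card = (minReps σ).card + 1 := by
  have h2 := card_merge (σ := σ * Equiv.swap a b) hab (split_not_sameCycle hab h)
  rwa [mul_assoc, Equiv.swap_mul_self, mul_one] at h2

lemma card_step (σ : Equiv.Perm (Fin n)) (hab : a ≠ b) :
    (minReps σ).card ≤ (minReps (σ * Equiv.swap a b)).card + 1 := by
  by_cases h : σ.SameCycle a b
  · rw [card_split hab h]; omega
  · rw [card_merge hab h]

lemma card_step_left (ρ : Equiv.Perm (Fin n)) (hab : a ≠ b) :
    (minReps ρ).card ≤ (minReps (Equiv.swap a b * ρ)).card + 1 := by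
  have h1 := card_step (σ := ρ⁻¹) (a := a) (b := b) hab
  rw [minReps_inv] at h1
  have h3 : ρ⁻¹ * Equiv.swap a b = (Equiv.swap a b * ρ)⁻¹ := by
    rw [mul_inv_rev, Equiv.swap_inv]
  rw [h3, minReps_inv] at h1
  exact h1

end Split
section Inv

variable {n : ℕ}

lemma swap_val {i : ℕ} (h : i + 1 < n) (x : Fin n) :
    ((Equiv.swap ⟨i, Nat.lt_of_succ_lt h⟩ ⟨i + 1, h⟩ : Equiv.Perm (Fin n)) x).val
      = if x.val = i then i + 1 else if x.val = i + 1 then i else x.val := by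
  by_cases h1 : x = ⟨i, Nat.lt_of_succ_lt h⟩
  · subst h1; rw [Equiv.swap_apply_left]; simp
  by_cases h2 : x = ⟨i + 1, h⟩
  · subst h2; rw [Equiv.swap_apply_right]; simp
  · rw [Equiv.swap_apply_of_ne_of_ne h1 h2]
    have hv1 : x.val ≠ i := fun hc => h1 (Fin.ext hc)
    have hv2 : x.val ≠ i + 1 := fun hc => h2 (Fin.ext hc)
    simp [hv1, hv2]

lemma swap_lt_swap {i : ℕ} (h : i + 1 < n) {a b : Fin n} (hab : a < b)
    (hne : ¬(a = (⟨i, Nat.lt_of_succ_lt h⟩ : Fin n) ∧ b = (⟨i + 1, h⟩ : Fin n))) :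
    Equiv.swap (⟨i, Nat.lt_of_succ_lt h⟩ : Fin n) ⟨i + 1, h⟩ a
      < Equiv.swap (⟨i, Nat.lt_of_succ_lt h⟩ : Fin n) ⟨i + 1, h⟩ b := by
  have hne' : a.val ≠ i ∨ b.val ≠ i + 1 := by
    rcases not_and_or.mp hne with hx | hx
    · exact Or.inl (fun hc => hx (Fin.ext hc))
    · exact Or.inr (fun hc => hx (Fin.ext hc))
  rw [Fin.lt_def] at hab ⊢
  rw [swap_val h, swap_val h]
  rcases hne' with hx | hx <;> (split_ifs <;> omega)

lemma invCount_swap_ascent {σ : Equiv.Perm (Fin n)} {i : ℕ} (h : i + 1 < n)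
    (hasc : σ ⟨i, Nat.lt_of_succ_lt h⟩ < σ ⟨i + 1, h⟩) :
    invCount (σ * Equiv.swap ⟨i, Nat.lt_of_succ_lt h⟩ ⟨i + 1, h⟩) = invCount σ + 1 := by
  classical
  set fi : Fin n := ⟨i, Nat.lt_of_succ_lt h⟩ with hfi
  set fi1 : Fin n := ⟨i + 1, h⟩ with hfi1
  set s := Equiv.swap fi fi1 with hs
  have hfilt : fi < fi1 := by rw [Fin.lt_def]; simp [hfi, hfi1]
  set p0 : Fin n × Fin n := (fi, fi1) with hp0
  set A := Finset.univ.filter (fun p : Fin n × Fin n => p.1 < p.2 ∧ σ p.2 < σ p.1) with hA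
  set B := Finset.univ.filter
    (fun p : Fin n × Fin n => p.1 < p.2 ∧ (σ * s) p.2 < (σ * s) p.1) with hB
  have hiA : invCount σ = A.card := rfl
  have hiB : invCount (σ * s) = B.card := rfl
  have hsfi : s fi = fi1 := Equiv.swap_apply_left _ _
  have hsfi1 : s fi1 = fi := Equiv.swap_apply_right _ _
  have hcardeq : (B.erase p0).card = (A.erase p0).card := by
    apply Finset.card_bij' (i := fun p _ => (s p.1, s p.2)) (j := fun p _ => (s p.1, s p.2))
    · intro p hp
      rw [Finset.mem_erase, hB, Finset.mem_filter] at hp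
      obtain ⟨hpne, -, hp1, hp2⟩ := hp
      have hne : ¬(p.1 = fi ∧ p.2 = fi1) := by
        rintro ⟨e1, e2⟩
        exact hpne (Prod.ext e1 e2)
      rw [Finset.mem_erase, hA, Finset.mem_filter]
      refine ⟨?_, Finset.mem_univ _, swap_lt_swap h hp1 hne, hp2⟩
      intro hc
      have e1 : s p.1 = fi := congrArg Prod.fst hc
      have e2 : s p.2 = fi1 := congrArg Prod.snd hc
      have this1 : p.1 = fi1 := by
        have h3 := congrArg s e1
        rwa [hs, Equiv.swap_apply_self, Equiv.swap_apply_left] at h3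
      have h2 : p.2 = fi := by
        have h3 := congrArg s e2
        rwa [hs, Equiv.swap_apply_self, Equiv.swap_apply_right] at h3
      rw [this1, h2] at hp1
      exact absurd hp1 (not_lt.mpr (le_of_lt hfilt))
    · intro p hp
      rw [Finset.mem_erase, hA, Finset.mem_filter] at hp
      obtain ⟨hpne, -, hp1, hp2⟩ := hp
      have hne : ¬(p.1 = fi ∧ p.2 = fi1) := by
        rintro ⟨e1, e2⟩
        exact hpne (Prod.ext e1 e2)
      rw [Finset.mem_erase, hB, Finset.mem_filter]
      have hcond : (σ * s) (s p.2) < (σ * s) (s p.1) := by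
        show σ (s (s p.2)) < σ (s (s p.1))
        rw [Equiv.swap_apply_self, Equiv.swap_apply_self]
        exact hp2
      refine ⟨?_, Finset.mem_univ _, swap_lt_swap h hp1 hne, hcond⟩
      intro hc
      have e1 : s p.1 = fi := congrArg Prod.fst hc
      have e2 : s p.2 = fi1 := congrArg Prod.snd hc
      have this1 : p.1 = fi1 := by
        have h3 := congrArg s e1
        rwa [hs, Equiv.swap_apply_self, Equiv.swap_apply_left] at h3
      have h2 : p.2 = fi := by
        have h3 := congrArg s e2
        rwa [hs, Equiv.swap_apply_self, Equiv.swap_apply_right] at h3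
      rw [this1, h2] at hp1
      exact absurd hp1 (not_lt.mpr (le_of_lt hfilt))
    · intro p _; ext <;> simp [hs, Equiv.swap_apply_self]
    · intro p _; ext <;> simp [hs, Equiv.swap_apply_self]
  have hp0B : p0 ∈ B := by
    rw [hB, Finset.mem_filter]
    refine ⟨Finset.mem_univ _, hfilt, ?_⟩
    show σ (s fi1) < σ (s fi)
    rw [hsfi, hsfi1]
    exact hasc
  have hp0A : p0 ∉ A := by
    rw [hA, Finset.mem_filter]
    rintro ⟨-, -, hc⟩
    exact absurd hasc (not_lt.mpr (le_of_lt hc))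
  have h1 : (B.erase p0).card + 1 = B.card := Finset.card_erase_add_one hp0B
  have h2 : A.erase p0 = A := Finset.erase_eq_of_notMem hp0A
  rw [hiA, hiB, ← h1, hcardeq, h2]

lemma invCount_swap_descent {σ : Equiv.Perm (Fin n)} {i : ℕ} (h : i + 1 < n)
    (hdesc : σ ⟨i + 1, h⟩ < σ ⟨i, Nat.lt_of_succ_lt h⟩) :
    invCount σ = invCount (σ * Equiv.swap ⟨i, Nat.lt_of_succ_lt h⟩ ⟨i + 1, h⟩) + 1 := by
  set s := Equiv.swap (⟨i, Nat.lt_of_succ_lt h⟩ : Fin n) ⟨i + 1, h⟩ with hs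
  have h1 : (σ * s) ⟨i, Nat.lt_of_succ_lt h⟩ < (σ * s) ⟨i + 1, h⟩ := by
    show σ (s _) < σ (s _)
    rw [hs, Equiv.swap_apply_left, Equiv.swap_apply_right]
    exact hdesc
  have h2 := invCount_swap_ascent (σ := σ * s) h h1
  rwa [mul_assoc, hs, Equiv.swap_mul_self, mul_one] at h2

lemma invCount_one_eq : invCount (1 : Equiv.Perm (Fin n)) = 0 := by
  rw [invCount, Finset.card_eq_zero]
  ext p
  simp only [Finset.mem_filter, Finset.mem_univ, true_and, Finset.notMem_empty, iff_false]
  rintro ⟨h1, h2⟩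
  exact absurd h1 (not_lt.mpr (le_of_lt h2))

lemma invCount_inv (σ : Equiv.Perm (Fin n)) : invCount σ⁻¹ = invCount σ := by
  classical
  rw [invCount, invCount]
  apply Finset.card_bij' (i := fun p _ => (σ⁻¹ p.2, σ⁻¹ p.1)) (j := fun p _ => (σ p.2, σ p.1))
  · intro p hp
    rw [Finset.mem_filter] at hp ⊢
    obtain ⟨-, h1, h2⟩ := hp
    refine ⟨Finset.mem_univ _, h2, ?_⟩
    simpa using h1
  · intro p hp
    rw [Finset.mem_filter] at hp ⊢
    obtain ⟨-, h1, h2⟩ := hp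
    refine ⟨Finset.mem_univ _, h2, ?_⟩
    simpa using h1
  · intro p _; ext <;> simp
  · intro p _; ext <;> simp

lemma invCount_swap_le {σ : Equiv.Perm (Fin n)} {i : ℕ} (h : i + 1 < n) :
    invCount (σ * Equiv.swap ⟨i, Nat.lt_of_succ_lt h⟩ ⟨i + 1, h⟩) ≤ invCount σ + 1 := by
  rcases lt_or_ge (σ ⟨i, Nat.lt_of_succ_lt h⟩) (σ ⟨i + 1, h⟩) with hlt | hle
  · rw [invCount_swap_ascent h hlt]
  · have hne : σ ⟨i + 1, h⟩ ≠ σ ⟨i, Nat.lt_of_succ_lt h⟩ := by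
      intro hc
      have := σ.injective hc
      have := congrArg Fin.val this
      simp at this
    have hdesc : σ ⟨i + 1, h⟩ < σ ⟨i, Nat.lt_of_succ_lt h⟩ := lt_of_le_of_ne hle hne
    rw [invCount_swap_descent h hdesc]
    omega

lemma invCount_swap_mul_le {σ : Equiv.Perm (Fin n)} {i : ℕ} (h : i + 1 < n) :
    invCount (Equiv.swap (⟨i, Nat.lt_of_succ_lt h⟩ : Fin n) ⟨i + 1, h⟩ * σ) ≤ invCount σ + 1 := by
  have h1 : Equiv.swap (⟨i, Nat.lt_of_succ_lt h⟩ : Fin n) ⟨i + 1, h⟩ * σ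
      = (σ⁻¹ * Equiv.swap (⟨i, Nat.lt_of_succ_lt h⟩ : Fin n) ⟨i + 1, h⟩)⁻¹ := by
    rw [mul_inv_rev, inv_inv, Equiv.swap_inv]
  rw [h1, invCount_inv]
  calc invCount (σ⁻¹ * Equiv.swap (⟨i, Nat.lt_of_succ_lt h⟩ : Fin n) ⟨i + 1, h⟩)
      ≤ invCount σ⁻¹ + 1 := invCount_swap_le h
    _ = invCount σ + 1 := by rw [invCount_inv]

lemma invCount_prod_le (l : List (Equiv.Perm (Fin n)))
    (hl : ∀ τ ∈ l, IsSimpleTransposition τ) : invCount l.prod ≤ l.length := by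
  induction l with
  | nil => simp [invCount_one_eq]
  | cons τ t ih =>
    obtain ⟨i, h, rfl⟩ := hl τ (List.mem_cons_self)
    rw [List.prod_cons]
    calc invCount (Equiv.swap (⟨i, Nat.lt_of_succ_lt h⟩ : Fin n) ⟨i + 1, h⟩ * t.prod)
        ≤ invCount t.prod + 1 := invCount_swap_mul_le h
      _ ≤ t.length + 1 := by
          have := ih (fun τ' ht => hl τ' (List.mem_cons_of_mem _ ht))
          omega
      _ = (Equiv.swap (⟨i, Nat.lt_of_succ_lt h⟩ : Fin n) ⟨i + 1, h⟩ :: t).length := by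
          simp

end Inv
section Decomp

variable {n : ℕ}

lemma exists_descent {σ : Equiv.Perm (Fin n)} (hσ : σ ≠ 1) :
    ∃ (i : ℕ) (h : i + 1 < n), σ ⟨i + 1, h⟩ < σ ⟨i, Nat.lt_of_succ_lt h⟩ := by
  by_contra hc
  push_neg at hc
  apply hσ
  have hsm : StrictMono σ := by
    cases n with
    | zero => intro x; exact absurd x.2 (Nat.not_lt_zero _)
    | succ m =>
      rw [Fin.strictMono_iff_lt_succ]
      intro i2
      have h2 : (i2 : ℕ) + 1 < m + 1 := by omega
      have hle := hc i2.val h2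
      have e1 : Fin.castSucc i2 = (⟨i2.val, Nat.lt_of_succ_lt h2⟩ : Fin (m+1)) := by
        ext; simp
      have e2 : i2.succ = (⟨i2.val + 1, h2⟩ : Fin (m+1)) := by
        ext; simp
      rw [e1, e2]
      refine lt_of_le_of_ne hle ?_
      intro hc2
      have := σ.injective hc2
      have := congrArg Fin.val this
      simp at this
  have hfun : ⇑σ = id := by
    apply (hsm.range_inj strictMono_id).mp
    rw [Equiv.range_eq_univ]
    exact (Set.range_id).symm
  ext x
  rw [hfun]
  rfl

lemma exists_decomp : ∀ (k : ℕ) (σ : Equiv.Perm (Fin n)), invCount σ = k →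
    ∃ l : List (Equiv.Perm (Fin n)),
      (∀ τ ∈ l, IsSimpleTransposition τ) ∧ σ = l.prod ∧ l.length = k := by
  intro k
  induction k using Nat.strong_induction_on with
  | _ k ih =>
    intro σ hσ
    by_cases h1 : σ = 1
    · subst h1
      refine ⟨[], by simp, by simp, ?_⟩
      rw [← hσ, invCount_one_eq]
      rfl
    · obtain ⟨i, h, hdesc⟩ := exists_descent h1
      set s := Equiv.swap (⟨i, Nat.lt_of_succ_lt h⟩ : Fin n) ⟨i + 1, h⟩ with hs
      have hstep : invCount σ = invCount (σ * s) + 1 := invCount_swap_descent h hdesc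
      have hlt : invCount (σ * s) < k := by omega
      obtain ⟨l, hl1, hl2, hl3⟩ := ih _ hlt (σ * s) rfl
      refine ⟨l ++ [s], ?_, ?_, ?_⟩
      · intro τ hτ
        rcases List.mem_append.mp hτ with hτ | hτ
        · exact hl1 τ hτ
        · rw [List.mem_singleton.mp hτ, hs]
          exact ⟨i, h, rfl⟩
      · rw [List.prod_append, List.prod_singleton, ← hl2, mul_assoc, hs,
          Equiv.swap_mul_self, mul_one]
      · rw [List.length_append, List.length_singleton, hl3]
        omega

end Decomp
section Reach

variable {n : ℕ}

def hasEdge (l : List (Equiv.Perm (Fin n))) (j : ℕ) : Prop :=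
  ∃ h : j + 1 < n, Equiv.swap ⟨j, Nat.lt_of_succ_lt h⟩ ⟨j + 1, h⟩ ∈ l

def reach (l : List (Equiv.Perm (Fin n))) (x y : Fin n) : Prop :=
  ∀ j : ℕ, min x.val y.val ≤ j → j < max x.val y.val → hasEdge l j

lemma reach_refl (l : List (Equiv.Perm (Fin n))) (x : Fin n) : reach l x x := by
  intro j h1 h2
  simp only [min_self, max_self] at h1 h2
  omega

lemma reach_trans {l : List (Equiv.Perm (Fin n))} {x y z : Fin n}
    (h1 : reach l x y) (h2 : reach l y z) : reach l x z := by
  intro j hj1 hj2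
  by_cases hcase : min x.val y.val ≤ j ∧ j < max x.val y.val
  · exact h1 j hcase.1 hcase.2
  · rcases not_and_or.mp hcase with h' | h'
    · rw [not_le] at h'
      exact h2 j (by omega) (by omega)
    · rw [not_lt] at h'
      exact h2 j (by omega) (by omega)

lemma reach_mono {l t : List (Equiv.Perm (Fin n))} (hsub : ∀ τ ∈ t, τ ∈ l) {x y : Fin n}
    (h : reach t x y) : reach l x y := by
  intro j h1 h2
  obtain ⟨hj, hmem⟩ := h j h1 h2
  exact ⟨hj, hsub _ hmem⟩

lemma reach_prod_apply (l : List (Equiv.Perm (Fin n)))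
    (hl : ∀ τ ∈ l, IsSimpleTransposition τ) : ∀ x : Fin n, reach l x (l.prod x) := by
  induction l with
  | nil => intro x; simpa using reach_refl [] x
  | cons τ t ih =>
    intro x
    rw [List.prod_cons, Equiv.Perm.mul_apply]
    set z := t.prod x with hz
    have hxz : reach (τ :: t) x z :=
      reach_mono (fun τ' h' => List.mem_cons_of_mem _ h')
        (ih (fun τ' h' => hl τ' (List.mem_cons_of_mem _ h')) x)
    refine reach_trans hxz ?_
    obtain ⟨j, hj, rfl⟩ := hl τ (List.mem_cons_self)
    set w := (Equiv.swap (⟨j, Nat.lt_of_succ_lt hj⟩ : Fin n) ⟨j + 1, hj⟩) z with hwdef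
    have hvw : w.val = if z.val = j then j + 1 else if z.val = j + 1 then j else z.val := by
      rw [hwdef]; exact swap_val hj z
    intro j' hj1 hj2
    by_cases hc1 : z.val = j
    · have hw1 : w.val = j + 1 := by rw [hvw, if_pos hc1]
      have hjj : j' = j := by omega
      rw [hjj]
      exact ⟨hj, List.mem_cons_self⟩
    by_cases hc2 : z.val = j + 1
    · have hw1 : w.val = j := by rw [hvw, if_neg hc1, if_pos hc2]
      have hjj : j' = j := by omega
      rw [hjj]
      exact ⟨hj, List.mem_cons_self⟩
    · have hw1 : w.val = z.val := by rw [hvw, if_neg hc1, if_neg hc2]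
      omega

lemma reach_of_sameCycle (l : List (Equiv.Perm (Fin n)))
    (hl : ∀ τ ∈ l, IsSimpleTransposition τ) {x y : Fin n}
    (h : (l.prod).SameCycle x y) : reach l x y := by
  have hs : ∀ w ∈ {w : Fin n | reach l x w}, l.prod w ∈ {w : Fin n | reach l x w} :=
    fun w hw => reach_trans hw (reach_prod_apply l hl w)
  exact aux_sameCycle_mem hs (reach_refl l x) h

lemma nodup_of_tight (l : List (Equiv.Perm (Fin n)))
    (hl : ∀ τ ∈ l, IsSimpleTransposition τ)
    (hlen : l.length + (minReps l.prod).card = n) : l.Nodup := by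
  classical
  set ρ := l.prod with hρ
  set I : Finset ℕ := (Finset.range n).filter (hasEdge l) with hI
  have hpos : ∀ z ∈ Finset.univ \ minReps ρ, ∃ y : Fin n, ρ.SameCycle z y ∧ y < z := by
    intro z hz
    rw [Finset.mem_sdiff] at hz
    have hz2 := hz.2
    rw [mem_minReps] at hz2
    push_neg at hz2
    obtain ⟨y, hy1, hy2⟩ := hz2
    exact ⟨y, hy1, hy2⟩
  have hb1 : (Finset.univ \ minReps ρ).card ≤ I.card := by
    apply Finset.card_le_card_of_injOn (fun x => x.val - 1)
    · intro x hx
      obtain ⟨y, hy1, hy2⟩ := hpos x hx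
      have hreach := reach_of_sameCycle l hl hy1
      have hylt : y.val < x.val := hy2
      have hedge : hasEdge l (x.val - 1) := by
        apply hreach (x.val - 1) (by omega) (by omega)
      simp only [Finset.mem_coe]
      rw [Finset.mem_filter, Finset.mem_range]
      exact ⟨by omega, hedge⟩
    · intro x hx x' hx' hxx
      obtain ⟨y, -, hy2⟩ := hpos x hx
      obtain ⟨y', -, hy2'⟩ := hpos x' hx'
      have h1 : 1 ≤ x.val := by
        have : y.val < x.val := hy2
        omega
      have h2 : 1 ≤ x'.val := by
        have : y'.val < x'.val := hy2'
        omega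
      apply Fin.ext
      simp only at hxx
      omega
  have hb2 : I.card ≤ l.toFinset.card := by
    apply Finset.card_le_card_of_injOn
      (fun j => if h : j + 1 < n then
        (Equiv.swap ⟨j, Nat.lt_of_succ_lt h⟩ ⟨j + 1, h⟩ : Equiv.Perm (Fin n)) else 1)
    · intro j hj
      obtain ⟨h', hmem⟩ := (Finset.mem_filter.mp hj).2
      simp only [Finset.mem_coe]
      rw [dif_pos h', List.mem_toFinset]
      exact hmem
    · intro j hj j' hj' heq
      obtain ⟨h1, hmem1⟩ := (Finset.mem_filter.mp hj).2
      obtain ⟨h2, hmem2⟩ := (Finset.mem_filter.mp hj').2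
      simp only [dif_pos h1, dif_pos h2] at heq
      have hv := congrArg
        (fun (π : Equiv.Perm (Fin n)) => (π ⟨j, Nat.lt_of_succ_lt h1⟩).val) heq
      rw [swap_val h1, swap_val h2] at hv
      simp only at hv
      split_ifs at hv <;> omega
  have hcomp : (Finset.univ \ minReps ρ).card = n - (minReps ρ).card := by
    rw [Finset.card_sdiff_of_subset (Finset.subset_univ _), Finset.card_univ, Fintype.card_fin]
  have hdedup : l.toFinset.card = l.dedup.length := List.card_toFinset l
  have hsl : l.dedup.length ≤ l.length := List.Sublist.length_le (List.dedup_sublist l)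
  have hcard : (minReps ρ).card ≤ n := by
    calc (minReps ρ).card ≤ Finset.univ.card := Finset.card_le_card (Finset.subset_univ _)
      _ = n := by rw [Finset.card_univ, Fintype.card_fin]
  have hlend : l.dedup.length = l.length := by omega
  have heql : l.dedup = l := (List.dedup_sublist l).eq_of_length hlend
  rw [← heql]
  exact List.nodup_dedup l

end Reach
section Final

variable {n : ℕ}

lemma prod_keeps_below {i : ℕ} :
    ∀ (t : List (Equiv.Perm (Fin n))),
      (∀ τ ∈ t, ∃ (j : ℕ) (hj : j + 1 < n), j ≠ i ∧
        τ = Equiv.swap ⟨j, Nat.lt_of_succ_lt hj⟩ ⟨j + 1, hj⟩) →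
      ∀ x : Fin n, x.val ≤ i → (t.prod x).val ≤ i := by
  intro t
  induction t with
  | nil => intro _ x hx; simpa using hx
  | cons τ t ih =>
    intro ht x hx
    rw [List.prod_cons, Equiv.Perm.mul_apply]
    have hz : (t.prod x).val ≤ i := ih (fun τ' h' => ht τ' (List.mem_cons_of_mem _ h')) x hx
    obtain ⟨j, hj, hji, rfl⟩ := ht τ (List.mem_cons_self)
    rw [swap_val hj]
    split_ifs <;> omega

lemma card_minReps_prod_nodup :
    ∀ (l : List (Equiv.Perm (Fin n))), (∀ τ ∈ l, IsSimpleTransposition τ) → l.Nodup →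
      (minReps l.prod).card + l.length = n := by
  intro l
  induction l with
  | nil =>
    intro _ _
    rw [List.prod_nil, List.length_nil, minReps_one, Finset.card_univ, Fintype.card_fin]
    omega
  | cons τ t ih =>
    intro hl hnd
    obtain ⟨i, h, rfl⟩ := hl τ (List.mem_cons_self)
    set s := Equiv.swap (⟨i, Nat.lt_of_succ_lt h⟩ : Fin n) ⟨i + 1, h⟩ with hs
    have hnotin : s ∉ t := (List.nodup_cons.mp hnd).1
    have hindex : ∀ τ' ∈ t, ∃ (j : ℕ) (hj : j + 1 < n), j ≠ i ∧
        τ' = Equiv.swap ⟨j, Nat.lt_of_succ_lt hj⟩ ⟨j + 1, hj⟩ := by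
      intro τ' ht'
      obtain ⟨j, hj, rfl⟩ := hl τ' (List.mem_cons_of_mem _ ht')
      refine ⟨j, hj, ?_, rfl⟩
      intro hji
      subst hji
      exact hnotin ht'
    have hnc : ¬ (t.prod).SameCycle ⟨i, Nat.lt_of_succ_lt h⟩ ⟨i + 1, h⟩ := by
      intro hc
      have hmem := aux_sameCycle_mem (τ := t.prod) (s := {x : Fin n | x.val ≤ i})
        (fun x hx => prod_keeps_below t hindex x hx)
        (show ((⟨i, Nat.lt_of_succ_lt h⟩ : Fin n)).val ≤ i from le_refl i) hc
      have : i + 1 ≤ i := hmem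
      omega
    have hne : (⟨i, Nat.lt_of_succ_lt h⟩ : Fin n) ≠ ⟨i + 1, h⟩ := by
      intro hc
      have := congrArg Fin.val hc
      simp at this
    have hinv : ¬ (t.prod⁻¹).SameCycle ⟨i, Nat.lt_of_succ_lt h⟩ ⟨i + 1, h⟩ := by
      intro hc
      exact hnc (Equiv.Perm.sameCycle_inv.mp hc)
    have hmerge := card_merge (σ := t.prod⁻¹) hne hinv
    rw [minReps_inv] at hmerge
    have hsinv : s⁻¹ = s := by rw [hs]; exact Equiv.swap_inv _ _
    have he : t.prod⁻¹ * s = (s * t.prod)⁻¹ := by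
      rw [mul_inv_rev, hsinv]
    rw [he, minReps_inv] at hmerge
    have iht := ih (fun τ' h' => hl τ' (List.mem_cons_of_mem _ h')) (List.nodup_cons.mp hnd).2
    rw [List.prod_cons, List.length_cons]
    omega

lemma card_minReps_prod_ge :
    ∀ (l : List (Equiv.Perm (Fin n))), (∀ τ ∈ l, IsSimpleTransposition τ) →
      n ≤ l.length + (minReps l.prod).card := by
  intro l
  induction l with
  | nil =>
    intro _
    rw [List.prod_nil, List.length_nil, minReps_one, Finset.card_univ, Fintype.card_fin]
    omega
  | cons τ t ih =>
    intro hl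
    obtain ⟨i, h, rfl⟩ := hl τ (List.mem_cons_self)
    have hne : (⟨i, Nat.lt_of_succ_lt h⟩ : Fin n) ≠ ⟨i + 1, h⟩ := by
      intro hc
      have := congrArg Fin.val hc
      simp at this
    have hstep := card_step_left (a := (⟨i, Nat.lt_of_succ_lt h⟩ : Fin n)) (b := ⟨i + 1, h⟩)
      t.prod hne
    have iht := ih (fun τ' h' => hl τ' (List.mem_cons_of_mem _ h'))
    rw [List.prod_cons, List.length_cons]
    omega

end Final

/-- For every permutation σ of {1,…,n}, ℓ(σ) + c(σ) ≥ n, with equality if and only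
if σ is a product of pairwise distinct simple transpositions. -/
theorem length_add_orbitCount_ge (n : ℕ) (σ : Equiv.Perm (Fin n)) :
    n ≤ invCount σ + orbitCount σ ∧
      (invCount σ + orbitCount σ = n ↔ IsProdOfDistinctSimpleTranspositions σ) := by
  obtain ⟨l, hl, hprod, hlen⟩ := exists_decomp (invCount σ) σ rfl
  have hineq : n ≤ invCount σ + orbitCount σ := by
    rw [orbitCount_eq]
    calc n ≤ l.length + (minReps l.prod).card := card_minReps_prod_ge l hl
      _ = invCount σ + (minReps σ).card := by rw [hlen, ← hprod]
  refine ⟨hineq, ?_, ?_⟩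
  · intro heq
    have hlen2 : l.length + (minReps l.prod).card = n := by
      rw [hlen, ← hprod, ← orbitCount_eq]
      exact heq
    exact ⟨l, nodup_of_tight l hl hlen2, hl, hprod⟩
  · rintro ⟨l', hnd', hl', rfl⟩
    have h1 : (minReps l'.prod).card + l'.length = n := card_minReps_prod_nodup l' hl' hnd'
    have h2 : invCount l'.prod ≤ l'.length := invCount_prod_le l' hl'
    have h3 := hineq
    rw [orbitCount_eq] at h3 ⊢
    omega
end

section
/- For every n ≥ 1, the number of permutations σ of {1,…,n} which are products of pairwise distinct simple transpositions equals F_{2n}, where (F_m) is the Fibonacci sequence normalized so that F_1 = 0 and F_2 = 1 (equivalently, with Mathlib's convention fib(0) = 0, fib(1) = 1, this number equals fib(2n−1)). -/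
namespace SimpleTranspositionsAux

open Equiv Equiv.Perm

local notation "P" => IsProdOfDistinctSimpleTranspositions

/-! ### Simple transpositions -/

/-- The simple transposition `(i, i+1)`. -/
def simpleT {m : ℕ} (i : ℕ) (h : i + 1 < m) : Equiv.Perm (Fin m) :=
  Equiv.swap ⟨i, Nat.lt_of_succ_lt h⟩ ⟨i + 1, h⟩

lemma isSimpleT_iff {n : ℕ} (τ : Equiv.Perm (Fin n)) :
    IsSimpleTransposition τ ↔ ∃ (i : ℕ) (h : i + 1 < n), τ = simpleT i h := Iff.rfl

lemma simpleT_apply_of_ne {m : ℕ} (i : ℕ) (h : i + 1 < m) (x : Fin m)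
    (h1 : (x : ℕ) ≠ i) (h2 : (x : ℕ) ≠ i + 1) : simpleT i h x = x := by
  rw [simpleT, Equiv.swap_apply_of_ne_of_ne]
  · exact fun hx => h1 (by simpa using congrArg Fin.val hx)
  · exact fun hx => h2 (by simpa using congrArg Fin.val hx)

lemma simpleT_fix_zero {m : ℕ} (i : ℕ) (h : i + 1 < m + 1) (hi : i ≠ 0) :
    simpleT i h (0 : Fin (m+1)) = 0 :=
  simpleT_apply_of_ne i h 0 (by simpa using Ne.symm hi) (by simp)

lemma simpleT_zero_apply_zero {m : ℕ} (h1 : 1 < m + 1) :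
    simpleT 0 h1 (0 : Fin (m+1)) = ⟨1, h1⟩ := by
  have : (0 : Fin (m+1)) = ⟨0, Nat.lt_of_succ_lt h1⟩ := rfl
  rw [this, simpleT, Equiv.swap_apply_left]

lemma simpleT_commute {m : ℕ} (i j : ℕ) (hi : i + 1 < m) (hj : j + 1 < m)
    (hd : i + 2 ≤ j) : Commute (simpleT i hi) (simpleT j hj) := by
  apply Equiv.Perm.Disjoint.commute
  intro x
  rcases Nat.lt_or_ge (x : ℕ) (i + 2) with hx | hx
  · right
    exact simpleT_apply_of_ne j hj x (by omega) (by omega)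
  · left
    exact simpleT_apply_of_ne i hi x (by omega) (by omega)

lemma simple_of_ne_s0 {m : ℕ} (τ : Equiv.Perm (Fin m)) (hτ : IsSimpleTransposition τ)
    (h1 : 1 < m) (hne : τ ≠ simpleT 0 h1) :
    ∃ (j : ℕ) (h : j + 1 < m), j ≠ 0 ∧ τ = simpleT j h := by
  obtain ⟨j, h, rfl⟩ := (isSimpleT_iff τ).mp hτ
  refine ⟨j, h, ?_, rfl⟩
  rintro rfl
  exact hne rfl

/-! ### Products of lists of simple transpositions -/

lemma prod_apply_fix {m : ℕ} (l : List (Equiv.Perm (Fin m))) (x : Fin m)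
    (h : ∀ τ ∈ l, τ x = x) : l.prod x = x := by
  induction l with
  | nil => rfl
  | cons a t ih =>
    rw [List.prod_cons, Equiv.Perm.mul_apply, ih (fun τ ht => h τ (List.mem_cons_of_mem a ht)),
      h a List.mem_cons_self]

/-- If a nodup word of simple transpositions contains `s_i` and does not contain `s_{i-1}`,
then the product moves the point `i`. -/
lemma prod_moves_point {m : ℕ} (l : List (Equiv.Perm (Fin m))) (hnd : l.Nodup)
    (hs : ∀ τ ∈ l, IsSimpleTransposition τ)
    (i : ℕ) (hi : i + 1 < m)
    (hmem : simpleT i hi ∈ l)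
    (hbelow : ∀ (j : ℕ) (h' : j + 1 < m), j + 1 = i → simpleT j h' ∉ l) :
    l.prod ⟨i, Nat.lt_of_succ_lt hi⟩ ≠ ⟨i, Nat.lt_of_succ_lt hi⟩ := by
  obtain ⟨l₁, l₂, rfl⟩ := List.append_of_mem hmem
  have hnd₂ : (simpleT i hi :: l₂).Nodup := hnd.of_append_right
  have hnotmem₂ : simpleT i hi ∉ l₂ := (List.nodup_cons.mp hnd₂).1
  have hnotmem₁ : simpleT i hi ∉ l₁ := fun h =>
    (List.disjoint_of_nodup_append hnd) h List.mem_cons_self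
  have hfix : ∀ τ, τ ∈ l₁ ∨ τ ∈ l₂ → τ ⟨i, Nat.lt_of_succ_lt hi⟩ = ⟨i, Nat.lt_of_succ_lt hi⟩ := by
    intro τ hτ
    have hτl : τ ∈ l₁ ++ simpleT i hi :: l₂ := by
      rcases hτ with h | h
      · exact List.mem_append_left _ h
      · exact List.mem_append_right _ (List.mem_cons_of_mem _ h)
    obtain ⟨j, hj, rfl⟩ := (isSimpleT_iff τ).mp (hs τ hτl)
    have hji : j ≠ i := by
      rintro rfl
      rcases hτ with h | h
      · exact hnotmem₁ h
      · exact hnotmem₂ h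
    have hji' : j + 1 ≠ i := by
      intro hji'
      have := hbelow j hj hji'
      rcases hτ with h | h
      · exact this (List.mem_append_left _ h)
      · exact this (List.mem_append_right _ (List.mem_cons_of_mem _ h))
    exact simpleT_apply_of_ne j hj _ (fun h => hji (h.symm)) (fun h => hji' (h.symm))
  rw [List.prod_append, List.prod_cons]
  have h2 : l₂.prod ⟨i, Nat.lt_of_succ_lt hi⟩ = ⟨i, Nat.lt_of_succ_lt hi⟩ :=
    prod_apply_fix l₂ _ (fun τ ht => hfix τ (Or.inr ht))
  have h1 : l₁.prod ⟨i, Nat.lt_of_succ_lt hi⟩ = ⟨i, Nat.lt_of_succ_lt hi⟩ :=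
    prod_apply_fix l₁ _ (fun τ ht => hfix τ (Or.inl ht))
  simp only [Equiv.Perm.mul_apply, h2]
  have hst : simpleT i hi ⟨i, Nat.lt_of_succ_lt hi⟩ = ⟨i+1, hi⟩ := by
    simp [simpleT]
  rw [hst]
  intro hcon
  have := l₁.prod.injective (hcon.trans h1.symm)
  have := congrArg Fin.val this
  simp at this

/-- If a nodup word of simple transpositions contains `s_0`, the product moves `0`. -/
lemma prod_moves_zero {m : ℕ} (l : List (Equiv.Perm (Fin (m+1)))) (hnd : l.Nodup)
    (hs : ∀ τ ∈ l, IsSimpleTransposition τ) (h1 : 1 < m + 1)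
    (hmem : simpleT 0 h1 ∈ l) : l.prod 0 ≠ 0 :=
  prod_moves_point l hnd hs 0 h1 hmem (fun j _ hj => absurd hj (by omega))

/-! ### Extracting a commuting element from a product -/

lemma prod_extract_left {G : Type*} [Group G] (l₁ l₂ : List G) (x : G)
    (h : ∀ y ∈ l₁, Commute x y) :
    (l₁ ++ x :: l₂).prod = x * (l₁ ++ l₂).prod := by
  have hc : Commute x l₁.prod := Commute.list_prod_right _ _ h
  rw [List.prod_append, List.prod_cons, List.prod_append, ← mul_assoc, ← hc.eq, mul_assoc]

lemma prod_extract_right {G : Type*} [Group G] (l₁ l₂ : List G) (x : G)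
    (h : ∀ y ∈ l₂, Commute x y) :
    (l₁ ++ x :: l₂).prod = (l₁ ++ l₂).prod * x := by
  have hc : Commute x l₂.prod := Commute.list_prod_right _ _ h
  rw [List.prod_append, List.prod_cons, List.prod_append, ← mul_assoc, mul_assoc l₁.prod,
    hc.eq, ← mul_assoc]

/-! ### Lifting permutations of `Fin n` to `Fin (n+1)` fixing `0` -/

/-- Lift a permutation of `Fin n` to a permutation of `Fin (n+1)` fixing `0`. -/
def liftPerm {n : ℕ} (σ : Equiv.Perm (Fin n)) : Equiv.Perm (Fin (n + 1)) where
  toFun := Fin.cases 0 (fun i => (σ i).succ)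
  invFun := Fin.cases 0 (fun i => (σ.symm i).succ)
  left_inv x := by cases x using Fin.cases <;> simp
  right_inv x := by cases x using Fin.cases <;> simp

@[simp] lemma liftPerm_zero {n : ℕ} (σ : Equiv.Perm (Fin n)) : liftPerm σ 0 = 0 := rfl

@[simp] lemma liftPerm_succ {n : ℕ} (σ : Equiv.Perm (Fin n)) (i : Fin n) :
    liftPerm σ i.succ = (σ i).succ := rfl

lemma liftPerm_injective {n : ℕ} : Function.Injective (liftPerm (n := n)) := by
  intro σ τ h
  ext i
  have := congrArg (fun f => f i.succ) h
  exact congrArg Fin.val (by simpa using this)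

lemma liftPerm_mul {n : ℕ} (σ τ : Equiv.Perm (Fin n)) :
    liftPerm (σ * τ) = liftPerm σ * liftPerm τ := by
  ext x
  cases x using Fin.cases <;> simp [Equiv.Perm.mul_apply]

lemma liftPerm_one {n : ℕ} : liftPerm (1 : Equiv.Perm (Fin n)) = 1 := by
  ext x; cases x using Fin.cases <;> simp

/-- `liftPerm` as a monoid hom. -/
def liftHom {n : ℕ} : Equiv.Perm (Fin n) →* Equiv.Perm (Fin (n+1)) where
  toFun := liftPerm
  map_one' := liftPerm_one
  map_mul' := liftPerm_mul

lemma liftPerm_swap {n : ℕ} (a b : Fin n) :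
    liftPerm (Equiv.swap a b) = Equiv.swap a.succ b.succ := by
  ext x
  cases x using Fin.cases with
  | zero =>
    rw [Equiv.swap_apply_of_ne_of_ne (Ne.symm (Fin.succ_ne_zero a)) (Ne.symm (Fin.succ_ne_zero b))]
    rfl
  | succ i =>
    rw [liftPerm_succ, Fin.succ_injective _ |>.swap_apply]

lemma liftPerm_simpleT {n : ℕ} (j : ℕ) (h : j + 1 < n) :
    liftPerm (simpleT j h) = simpleT (j+1) (Nat.succ_lt_succ h) := by
  rw [simpleT, liftPerm_swap]; rfl

lemma liftPerm_prod {n : ℕ} (l : List (Equiv.Perm (Fin n))) :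
    (l.map liftPerm).prod = liftPerm l.prod :=
  (List.prod_hom l (liftHom (n := n))).trans rfl

lemma exists_lift_list {n : ℕ} (l : List (Equiv.Perm (Fin (n+1))))
    (h : ∀ τ ∈ l, ∃ (j : ℕ) (hj : j + 1 < n + 1), j ≠ 0 ∧ τ = simpleT j hj) :
    ∃ l' : List (Equiv.Perm (Fin n)),
      l'.map liftPerm = l ∧ ∀ τ ∈ l', IsSimpleTransposition τ := by
  induction l with
  | nil => exact ⟨[], rfl, by simp⟩
  | cons a t ih =>
    obtain ⟨l', hmap, hsim⟩ := ih (fun τ ht => h τ (List.mem_cons_of_mem a ht))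
    obtain ⟨j, hj, hj0, rfl⟩ := h a List.mem_cons_self
    obtain ⟨k, rfl⟩ : ∃ k, j = k + 1 := ⟨j - 1, by omega⟩
    have hk : k + 1 < n := by omega
    refine ⟨simpleT k hk :: l', ?_, ?_⟩
    · rw [List.map_cons, hmap, liftPerm_simpleT]
    · intro τ hτ
      rcases List.mem_cons.mp hτ with he | ht
      · exact he ▸ ⟨k, hk, rfl⟩
      · exact hsim τ ht

lemma lift_P {n : ℕ} (τ : Equiv.Perm (Fin n)) (h : P τ) : P (liftPerm τ) := by
  obtain ⟨l, hnd, hsim, rfl⟩ := h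
  refine ⟨l.map liftPerm, hnd.map liftPerm_injective, ?_, (liftPerm_prod l).symm⟩
  intro τ' hτ'
  obtain ⟨a, ha, rfl⟩ := List.mem_map.mp hτ'
  obtain ⟨j, hj, rfl⟩ := (isSimpleT_iff a).mp (hsim a ha)
  rw [liftPerm_simpleT]
  exact ⟨j + 1, Nat.succ_lt_succ hj, rfl⟩

/-- A product of distinct simple transpositions fixing `0` avoids `s_0` and hence
is a lift. -/
lemma fixes_zero_eq_lift {n : ℕ} (σ : Equiv.Perm (Fin (n+1))) (hσ : P σ)
    (h0 : σ 0 = 0) : ∃ τ : Equiv.Perm (Fin n), P τ ∧ σ = liftPerm τ := by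
  obtain ⟨l, hnd, hsim, rfl⟩ := hσ
  have hs0 : ∀ τ ∈ l, ∃ (j : ℕ) (hj : j + 1 < n + 1), j ≠ 0 ∧ τ = simpleT j hj := by
    intro τ hτ
    obtain ⟨j, hj, rfl⟩ := (isSimpleT_iff τ).mp (hsim τ hτ)
    refine ⟨j, hj, ?_, rfl⟩
    rintro rfl
    exact prod_moves_zero l hnd hsim hj hτ h0
  obtain ⟨l', hmap, hsim'⟩ := exists_lift_list l hs0
  refine ⟨l'.prod, ⟨l', ?_, hsim', rfl⟩, by rw [← hmap, liftPerm_prod]⟩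
  have : (l'.map liftPerm).Nodup := hmap ▸ hnd
  exact this.of_map liftPerm



/-! ### The two recursions -/

lemma cardA (n : ℕ) :
    Nat.card {σ : Equiv.Perm (Fin (n+1)) // P σ}
      = Nat.card {τ : Equiv.Perm (Fin n) // P τ}
        + Nat.card {σ : Equiv.Perm (Fin (n+1)) // P σ ∧ σ 0 ≠ 0} := by
  classical
  have hbij : Function.Bijective
      (fun x : {τ : Equiv.Perm (Fin n) // P τ} ⊕ {σ : Equiv.Perm (Fin (n+1)) // P σ ∧ σ 0 ≠ 0} =>
        (Sum.elim (fun τ => (⟨liftPerm τ.1, lift_P τ.1 τ.2⟩ : {σ : Equiv.Perm (Fin (n+1)) // P σ}))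
          (fun σ => ⟨σ.1, σ.2.1⟩) x)) := by
    constructor
    · rintro (τ₁ | σ₁) (τ₂ | σ₂) h
      · simp only [Sum.elim_inl, Subtype.mk.injEq] at h
        exact congrArg Sum.inl (Subtype.ext (liftPerm_injective h))
      · exfalso
        simp only [Sum.elim_inl, Sum.elim_inr, Subtype.mk.injEq] at h
        exact σ₂.2.2 (by rw [← h, liftPerm_zero])
      · exfalso
        simp only [Sum.elim_inl, Sum.elim_inr, Subtype.mk.injEq] at h
        exact σ₁.2.2 (by rw [h, liftPerm_zero])
      · simp only [Sum.elim_inr, Subtype.mk.injEq] at h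
        exact congrArg Sum.inr (Subtype.ext h)
    · rintro ⟨σ, hσ⟩
      by_cases h0 : σ 0 = 0
      · obtain ⟨τ, hτ, rfl⟩ := fixes_zero_eq_lift σ hσ h0
        exact ⟨Sum.inl ⟨τ, hτ⟩, rfl⟩
      · exact ⟨Sum.inr ⟨σ, hσ, h0⟩, rfl⟩
  have := Nat.card_eq_of_bijective _ hbij
  rw [Nat.card_sum] at this
  exact this.symm

lemma cardB (n : ℕ) :
    Nat.card {σ : Equiv.Perm (Fin (n+2)) // P σ ∧ σ 0 ≠ 0}
      = Nat.card {τ : Equiv.Perm (Fin (n+1)) // P τ}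
        + Nat.card {τ : Equiv.Perm (Fin (n+1)) // P τ ∧ τ 0 ≠ 0} := by
  classical
  have h1 : (1 : ℕ) < n + 2 := by omega
  set s0 : Equiv.Perm (Fin (n+2)) := simpleT 0 h1 with hs0def
  -- the forward map
  have memL : ∀ τ : {τ : Equiv.Perm (Fin (n+1)) // P τ},
      P (s0 * liftPerm τ.1) ∧ (s0 * liftPerm τ.1) 0 ≠ 0 := by
    rintro ⟨τ, l, hnd, hsim, rfl⟩
    constructor
    · refine ⟨s0 :: l.map liftPerm, ?_, ?_, ?_⟩
      · rw [List.nodup_cons]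
        refine ⟨?_, hnd.map liftPerm_injective⟩
        intro hmem
        obtain ⟨a, _, ha⟩ := List.mem_map.mp hmem
        have h0a : liftPerm a 0 = s0 0 := by rw [ha]
        rw [liftPerm_zero, hs0def, simpleT_zero_apply_zero] at h0a
        exact absurd (congrArg Fin.val h0a) (by simp)
      · intro τ' hτ'
        rcases List.mem_cons.mp hτ' with he | ht
        · exact he ▸ ⟨0, h1, rfl⟩
        · obtain ⟨a, ha, rfl⟩ := List.mem_map.mp ht
          obtain ⟨j, hj, rfl⟩ := (isSimpleT_iff a).mp (hsim a ha)
          rw [liftPerm_simpleT]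
          exact ⟨j + 1, Nat.succ_lt_succ hj, rfl⟩
      · rw [List.prod_cons, liftPerm_prod]
    · rw [Equiv.Perm.mul_apply, liftPerm_zero, hs0def, simpleT_zero_apply_zero]
      intro hcon
      exact absurd (congrArg Fin.val hcon) (by simp)
  have memR : ∀ τ : {τ : Equiv.Perm (Fin (n+1)) // P τ ∧ τ 0 ≠ 0},
      P (liftPerm τ.1 * s0) ∧ (liftPerm τ.1 * s0) 0 ≠ 0 := by
    rintro ⟨τ, ⟨l, hnd, hsim, rfl⟩, hτ0⟩
    constructor
    · refine ⟨l.map liftPerm ++ [s0], ?_, ?_, ?_⟩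
      · rw [List.nodup_append]
        refine ⟨hnd.map liftPerm_injective, List.nodup_singleton _, ?_⟩
        intro x hx y hy hxs
        rw [List.mem_singleton] at hy
        subst hy hxs
        obtain ⟨a, _, ha⟩ := List.mem_map.mp hx
        have h0a : liftPerm a 0 = s0 0 := by rw [ha]
        rw [liftPerm_zero, hs0def, simpleT_zero_apply_zero] at h0a
        exact absurd (congrArg Fin.val h0a) (by simp)
      · intro τ' hτ'
        rcases List.mem_append.mp hτ' with ht | he
        · obtain ⟨a, ha, rfl⟩ := List.mem_map.mp ht
          obtain ⟨j, hj, rfl⟩ := (isSimpleT_iff a).mp (hsim a ha)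
          rw [liftPerm_simpleT]
          exact ⟨j + 1, Nat.succ_lt_succ hj, rfl⟩
        · rw [List.mem_singleton] at he
          exact he ▸ ⟨0, h1, rfl⟩
      · rw [List.prod_append, List.prod_singleton, liftPerm_prod]
    · rw [Equiv.Perm.mul_apply, hs0def, simpleT_zero_apply_zero]
      have : (⟨1, h1⟩ : Fin (n+2)) = (0 : Fin (n+1)).succ := rfl
      rw [this, liftPerm_succ]
      exact fun hcon => absurd hcon (Fin.succ_ne_zero _)
  have hbij : Function.Bijective
      (fun x : {τ : Equiv.Perm (Fin (n+1)) // P τ} ⊕ {τ : Equiv.Perm (Fin (n+1)) // P τ ∧ τ 0 ≠ 0} =>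
        (Sum.elim
          (fun τ => (⟨s0 * liftPerm τ.1, memL τ⟩ : {σ : Equiv.Perm (Fin (n+2)) // P σ ∧ σ 0 ≠ 0}))
          (fun τ => ⟨liftPerm τ.1 * s0, memR τ⟩) x)) := by
    constructor
    · have hval_inl : ∀ τ : {τ : Equiv.Perm (Fin (n+1)) // P τ},
          (s0 * liftPerm τ.1) 0 = ⟨1, h1⟩ := by
        intro τ
        rw [Equiv.Perm.mul_apply, liftPerm_zero, hs0def, simpleT_zero_apply_zero]
      have hval_inr : ∀ τ : {τ : Equiv.Perm (Fin (n+1)) // P τ ∧ τ 0 ≠ 0},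
          (liftPerm τ.1 * s0) 0 ≠ ⟨1, h1⟩ := by
        intro τ
        rw [Equiv.Perm.mul_apply, hs0def, simpleT_zero_apply_zero]
        have h' : (⟨1, h1⟩ : Fin (n+2)) = (0 : Fin (n+1)).succ := rfl
        rw [h', liftPerm_succ]
        intro hcon
        exact τ.2.2 (Fin.succ_injective _ hcon)
      rintro (τ₁ | τ₁) (τ₂ | τ₂) h
      · simp only [Sum.elim_inl, Subtype.mk.injEq] at h
        exact congrArg Sum.inl (Subtype.ext (liftPerm_injective (mul_left_cancel h)))
      · exfalso
        simp only [Sum.elim_inl, Sum.elim_inr, Subtype.mk.injEq] at h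
        exact hval_inr τ₂ (by rw [← h]; exact hval_inl τ₁)
      · exfalso
        simp only [Sum.elim_inl, Sum.elim_inr, Subtype.mk.injEq] at h
        exact hval_inr τ₁ (by rw [h]; exact hval_inl τ₂)
      · simp only [Sum.elim_inr, Subtype.mk.injEq] at h
        exact congrArg Sum.inr (Subtype.ext (liftPerm_injective (mul_right_cancel h)))
    · rintro ⟨σ, hσ, h0⟩
      obtain ⟨l, hnd, hsim, rfl⟩ := hσ
      -- s0 must occur in the word
      have hs0mem : s0 ∈ l := by
        by_contra hs0mem
        refine h0 (prod_apply_fix l 0 ?_)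
        intro τ hτ
        obtain ⟨j, hj, rfl⟩ := (isSimpleT_iff τ).mp (hsim τ hτ)
        refine simpleT_fix_zero j hj ?_
        rintro rfl
        exact hs0mem hτ
      obtain ⟨l₁, l₂, rfl⟩ := List.append_of_mem hs0mem
      have hndm : (l₁ ++ l₂).Nodup :=
        hnd.sublist ((List.Sublist.refl l₁).append (List.sublist_cons_self _ _))
      have hnotmem₁ : s0 ∉ l₁ := fun h =>
        (List.disjoint_of_nodup_append hnd) h List.mem_cons_self
      have hnotmem₂ : s0 ∉ l₂ := (List.nodup_cons.mp hnd.of_append_right).1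
      have hsimm : ∀ τ ∈ l₁ ++ l₂, IsSimpleTransposition τ := by
        intro τ hτ
        rcases List.mem_append.mp hτ with h | h
        · exact hsim τ (List.mem_append_left _ h)
        · exact hsim τ (List.mem_append_right _ (List.mem_cons_of_mem _ h))
      have hnes0 : ∀ τ ∈ l₁ ++ l₂, ∃ (j : ℕ) (hj : j + 1 < n + 2), j ≠ 0 ∧ τ = simpleT j hj := by
        intro τ hτ
        refine simple_of_ne_s0 τ (hsimm τ hτ) h1 ?_
        rintro rfl
        rcases List.mem_append.mp hτ with h | h
        · exact hnotmem₁ h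
        · exact hnotmem₂ h
      obtain ⟨l', hmap, hsim'⟩ := exists_lift_list (l₁ ++ l₂) hnes0
      have hnd' : l'.Nodup := (hmap ▸ hndm : (l'.map liftPerm).Nodup).of_map liftPerm
      have hPτ : P l'.prod := ⟨l', hnd', hsim', rfl⟩
      have hprodm : (l₁ ++ l₂).prod = liftPerm l'.prod := by rw [← hmap, liftPerm_prod]
      by_cases hcase : ∃ h2 : (2:ℕ) < n + 2, simpleT 1 h2 ∈ l₁
      · -- s1 occurs before s0 : pull s0 out to the right
        obtain ⟨h2, hs1mem⟩ := hcase
        have hcomm : ∀ y ∈ l₂, Commute s0 y := by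
          intro y hy
          obtain ⟨j, hj, hj0, rfl⟩ := hnes0 y (List.mem_append_right _ hy)
          have hj1 : j ≠ 1 := by
            rintro rfl
            exact (List.disjoint_of_nodup_append hnd) hs1mem (List.mem_cons_of_mem _ hy)
          exact simpleT_commute 0 j h1 hj (by omega)
        have hσeq : (l₁ ++ s0 :: l₂).prod = liftPerm l'.prod * s0 := by
          rw [prod_extract_right _ _ _ hcomm, hprodm]
        -- τ moves 0 since its word contains s_0 of Fin (n+1)
        have hn1 : (1:ℕ) < n + 1 := by omega
        have hs0'mem : simpleT 0 hn1 ∈ l' := by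
          have : liftPerm (simpleT 0 hn1) ∈ l'.map liftPerm := by
            rw [hmap, liftPerm_simpleT]
            refine List.mem_append_left _ ?_
            exact hs1mem
          obtain ⟨a, ha, hae⟩ := List.mem_map.mp this
          rwa [← liftPerm_injective hae]
        have hτ0 : l'.prod 0 ≠ 0 := prod_moves_zero l' hnd' hsim' hn1 hs0'mem
        exact ⟨Sum.inr ⟨l'.prod, hPτ, hτ0⟩, Subtype.ext hσeq.symm⟩
      · -- s1 does not occur before s0 : pull s0 out to the left
        have hcomm : ∀ y ∈ l₁, Commute s0 y := by
          intro y hy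
          obtain ⟨j, hj, hj0, rfl⟩ := hnes0 y (List.mem_append_left _ hy)
          have hj1 : j ≠ 1 := by
            rintro rfl
            exact hcase ⟨hj, hy⟩
          exact simpleT_commute 0 j h1 hj (by omega)
        have hσeq : (l₁ ++ s0 :: l₂).prod = s0 * liftPerm l'.prod := by
          rw [prod_extract_left _ _ _ hcomm, hprodm]
        exact ⟨Sum.inl ⟨l'.prod, hPτ⟩, Subtype.ext hσeq.symm⟩
  have := Nat.card_eq_of_bijective _ hbij
  rw [Nat.card_sum] at this
  exact this.symm



/-! ### Base cases and induction -/

lemma baseA : Nat.card {σ : Equiv.Perm (Fin 1) // P σ} = 1 := by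
  rw [Nat.card_eq_one_iff_unique]
  constructor
  · constructor
    intro a b
    exact Subtype.ext (Subsingleton.elim a.1 b.1)
  · exact ⟨1, [], List.nodup_nil, by simp, rfl⟩

lemma baseB : Nat.card {σ : Equiv.Perm (Fin 1) // P σ ∧ σ 0 ≠ 0} = 0 := by
  have : IsEmpty {σ : Equiv.Perm (Fin 1) // P σ ∧ σ 0 ≠ 0} :=
    ⟨fun x => x.2.2 (Subsingleton.elim _ _)⟩
  exact Nat.card_of_isEmpty

lemma main_induction (m : ℕ) :
    Nat.card {σ : Equiv.Perm (Fin (m+1)) // P σ} = Nat.fib (2*m+1) ∧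
    Nat.card {σ : Equiv.Perm (Fin (m+1)) // P σ ∧ σ 0 ≠ 0} = Nat.fib (2*m) := by
  induction m with
  | zero => exact ⟨baseA, baseB⟩
  | succ m ih =>
    obtain ⟨ihA, ihB⟩ := ih
    have hB : Nat.card {σ : Equiv.Perm (Fin (m+2)) // P σ ∧ σ 0 ≠ 0} = Nat.fib (2*(m+1)) := by
      rw [cardB, ihA, ihB]
      have : 2*(m+1) = (2*m) + 2 := by ring
      rw [this, Nat.fib_add_two, Nat.add_comm]
    have hA : Nat.card {σ : Equiv.Perm (Fin (m+2)) // P σ} = Nat.fib (2*(m+1)+1) := by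
      rw [cardA, ihA, hB]
      have : 2*(m+1)+1 = (2*m+1) + 2 := by ring
      rw [this, Nat.fib_add_two]
      have h2 : (2*m+1) + 1 = 2*(m+1) := by ring
      rw [h2]
    exact ⟨hA, hB⟩

end SimpleTranspositionsAux

/-- The number of permutations of {1,…,n} that are products of pairwise distinct
simple transpositions equals F_{2n}, i.e. (with Mathlib's convention) fib (2n-1). -/
theorem card_prodDistinctSimpleTranspositions (n : ℕ) (hn : 1 ≤ n) :
    Nat.card {σ : Equiv.Perm (Fin n) // IsProdOfDistinctSimpleTranspositions σ}
      = Nat.fib (2 * n - 1) := by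
  obtain ⟨m, rfl⟩ : ∃ m, n = m + 1 := ⟨n - 1, by omega⟩
  have := (SimpleTranspositionsAux.main_induction m).1
  have harith : 2 * (m + 1) - 1 = 2 * m + 1 := by omega
  rw [harith]
  exact this
end

section
/- Let σ be a permutation of {1,…,n} which is the product of a list of k pairwise distinct simple transpositions. Then ℓ(σ) = k; that is, any expression of a permutation as a product of pairwise distinct simple transpositions is a reduced word. -/
namespace STAux

open Equiv Finset

variable {n : ℕ}

def invSet (σ : Equiv.Perm (Fin n)) : Finset (Fin n × Fin n) :=
  Finset.univ.filter fun p : Fin n × Fin n => p.1 < p.2 ∧ σ p.2 < σ p.1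

lemma invCount_def (σ : Equiv.Perm (Fin n)) : invCount σ = (invSet σ).card := rfl

lemma mem_invSet {σ : Equiv.Perm (Fin n)} {p : Fin n × Fin n} :
    p ∈ invSet σ ↔ p.1 < p.2 ∧ σ p.2 < σ p.1 := by
  simp [invSet]

lemma swap_lt {a b : Fin n} (hab : (a : ℕ) + 1 = (b : ℕ)) {p q : Fin n}
    (hpq : p < q) (hne : ¬(p = a ∧ q = b)) :
    Equiv.swap a b p < Equiv.swap a b q := by
  rw [Equiv.swap_apply_def, Equiv.swap_apply_def]
  simp only [Fin.lt_def, Fin.ext_iff] at *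
  split_ifs <;> omega

lemma card_erase_eq (σ : Equiv.Perm (Fin n)) {a b : Fin n} (hab : (a : ℕ) + 1 = (b : ℕ)) :
    ((invSet (σ * Equiv.swap a b)).erase (a, b)).card = ((invSet σ).erase (a, b)).card := by
  have hs : ∀ x : Fin n, Equiv.swap a b (Equiv.swap a b x) = x := fun x => Equiv.swap_apply_self a b x
  have hlt : ∀ (τ : Equiv.Perm (Fin n)) (p : Fin n × Fin n),
      p ∈ (invSet τ).erase (a, b) → Equiv.swap a b p.1 < Equiv.swap a b p.2 := by
    intro τ p hp
    rw [Finset.mem_erase, mem_invSet] at hp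
    refine swap_lt hab hp.2.1 ?_
    intro hc
    exact hp.1 (Prod.ext hc.1 hc.2)
  have hmem : ∀ (τ : Equiv.Perm (Fin n)) (p : Fin n × Fin n),
      p ∈ (invSet τ).erase (a, b) →
      (Equiv.swap a b p.1, Equiv.swap a b p.2) ≠ (a, b) := by
    intro τ p hp hc
    rw [Prod.ext_iff] at hc
    have h1 : p.1 = b := by
      have := congrArg (Equiv.swap a b) hc.1; rwa [hs, Equiv.swap_apply_left] at this
    have h2 : p.2 = a := by
      have := congrArg (Equiv.swap a b) hc.2; rwa [hs, Equiv.swap_apply_right] at this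
    rw [Finset.mem_erase, mem_invSet] at hp
    have := hp.2.1
    rw [h1, h2, Fin.lt_def] at this
    omega
  refine Finset.card_bij' (fun p _ => (Equiv.swap a b p.1, Equiv.swap a b p.2))
    (fun p _ => (Equiv.swap a b p.1, Equiv.swap a b p.2)) ?_ ?_ ?_ ?_
  · intro p hp
    rw [Finset.mem_erase, mem_invSet]
    refine ⟨hmem _ p hp, hlt _ p hp, ?_⟩
    rw [Finset.mem_erase, mem_invSet] at hp
    have := hp.2.2
    simpa [Equiv.Perm.mul_apply] using this
  · intro p hp
    rw [Finset.mem_erase, mem_invSet]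
    refine ⟨hmem _ p hp, hlt _ p hp, ?_⟩
    rw [Finset.mem_erase, mem_invSet] at hp
    simpa [Equiv.Perm.mul_apply, hs] using hp.2.2
  · intro p hp; simp [hs]
  · intro p hp; simp [hs]

lemma a_lt_b {a b : Fin n} (hab : (a : ℕ) + 1 = (b : ℕ)) : a < b := by
  rw [Fin.lt_def]; omega

lemma invCount_mul_swap_of_lt {σ : Equiv.Perm (Fin n)} {a b : Fin n}
    (hab : (a : ℕ) + 1 = (b : ℕ)) (h : σ a < σ b) :
    invCount (σ * Equiv.swap a b) = invCount σ + 1 := by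
  have hin : (a, b) ∈ invSet (σ * Equiv.swap a b) := by
    rw [mem_invSet]
    simpa [Equiv.Perm.mul_apply] using ⟨a_lt_b hab, h⟩
  have hout : (a, b) ∉ invSet σ := by
    rw [mem_invSet]
    simp only [not_and]
    intro _
    exact not_lt.mpr h.le
  rw [invCount_def, invCount_def, ← Finset.card_erase_add_one hin, card_erase_eq σ hab,
    Finset.erase_eq_of_notMem hout]

lemma invCount_mul_swap_of_gt {σ : Equiv.Perm (Fin n)} {a b : Fin n}
    (hab : (a : ℕ) + 1 = (b : ℕ)) (h : σ b < σ a) :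
    invCount (σ * Equiv.swap a b) + 1 = invCount σ := by
  have hin : (a, b) ∈ invSet σ := mem_invSet.mpr ⟨a_lt_b hab, h⟩
  have hout : (a, b) ∉ invSet (σ * Equiv.swap a b) := by
    rw [mem_invSet]
    simp only [not_and, Equiv.Perm.mul_apply, Equiv.swap_apply_left, Equiv.swap_apply_right]
    intro _
    exact not_lt.mpr h.le
  rw [invCount_def, invCount_def, ← Finset.card_erase_add_one hin, ← card_erase_eq σ hab,
    Finset.erase_eq_of_notMem hout]

lemma invCount_mul_swap_le (σ : Equiv.Perm (Fin n)) {a b : Fin n}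
    (hab : (a : ℕ) + 1 = (b : ℕ)) :
    invCount (σ * Equiv.swap a b) ≤ invCount σ + 1 := by
  have hne : σ a ≠ σ b := fun hc => (a_lt_b hab).ne (σ.injective hc)
  rcases hne.lt_or_gt with h | h
  · exact le_of_eq (invCount_mul_swap_of_lt hab h)
  · have := invCount_mul_swap_of_gt hab h; omega

lemma exists_descent {σ : Equiv.Perm (Fin n)} (hσ : σ ≠ 1) :
    ∃ a b : Fin n, (a : ℕ) + 1 = (b : ℕ) ∧ σ b < σ a := by
  by_contra hc
  push_neg at hc
  apply hσ
  have hmono : StrictMono σ := by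
    cases n with
    | zero => exact fun x => x.elim0
    | succ m =>
      rw [Fin.strictMono_iff_lt_succ]
      intro i
      have hab : ((i.castSucc : Fin (m + 1)) : ℕ) + 1 = ((i.succ : Fin (m + 1)) : ℕ) := by simp
      have h1 := hc _ _ hab
      have hne : σ i.castSucc ≠ σ i.succ := fun hfn =>
        (a_lt_b hab).ne (σ.injective hfn)
      exact lt_of_le_of_ne h1 hne
  have : (σ : Fin n → Fin n) = (1 : Equiv.Perm (Fin n)) := by
    apply (hmono.range_inj strictMono_id).mp
    rw [Set.range_eq_univ.mpr σ.surjective, Set.range_id]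
  exact Equiv.coe_fn_injective this

lemma isSimple_swap {a b : Fin n} (hab : (a : ℕ) + 1 = (b : ℕ)) :
    IsSimpleTransposition (Equiv.swap a b) := by
  refine ⟨(a : ℕ), by omega, ?_⟩
  congr 1
  exact Fin.ext hab.symm

lemma exists_word : ∀ (m : ℕ) (σ : Equiv.Perm (Fin n)), invCount σ = m →
    ∃ l : List (Equiv.Perm (Fin n)), (∀ τ ∈ l, IsSimpleTransposition τ) ∧
      l.length = m ∧ σ = l.prod := by
  intro m
  induction m using Nat.strong_induction_on with
  | _ m ih =>
    intro σ hm
    by_cases hσ : σ = 1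
    · have h0 : invCount σ = 0 := by
        rw [invCount_def]
        rw [Finset.card_eq_zero]
        ext p
        simp only [mem_invSet, Finset.notMem_empty, iff_false, not_and, hσ]
        intro h1
        simp only [Equiv.Perm.one_apply]
        exact not_lt.mpr h1.le
      refine ⟨[], by simp, by simp [← hm, h0], by simp [hσ]⟩
    · obtain ⟨a, b, hab, hd⟩ := exists_descent hσ
      have hrec := invCount_mul_swap_of_gt hab hd
      have hmpos : 0 < m := by omega
      obtain ⟨l', hl'st, hl'len, hl'prod⟩ := ih (m - 1) (by omega) (σ * Equiv.swap a b) (by omega)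
      refine ⟨l' ++ [Equiv.swap a b], ?_, by simp [hl'len]; omega, ?_⟩
      · intro τ hτ
        rcases List.mem_append.mp hτ with h | h
        · exact hl'st τ h
        · rw [List.mem_singleton.mp h]; exact isSimple_swap hab
      · rw [List.prod_append, List.prod_singleton, ← hl'prod, mul_assoc,
          Equiv.swap_mul_self, mul_one]

def crossSet (σ : Equiv.Perm (Fin n)) : Finset (Fin n) :=
  Finset.univ.filter fun x : Fin n => ∃ j : Fin n, j ≤ x ∧ x < σ j

lemma mem_crossSet {σ : Equiv.Perm (Fin n)} {x : Fin n} :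
    x ∈ crossSet σ ↔ ∃ j : Fin n, j ≤ x ∧ x < σ j := by simp [crossSet]

lemma crossSet_one : crossSet (1 : Equiv.Perm (Fin n)) = ∅ := by
  ext x
  simp only [mem_crossSet, Finset.notMem_empty, iff_false, not_exists, not_and,
    Equiv.Perm.one_apply]
  intro j hj
  exact not_lt.mpr hj

lemma crossSet_subset {σ : Equiv.Perm (Fin n)} {a b : Fin n} (hab : (a : ℕ) + 1 = (b : ℕ)) :
    crossSet σ ⊆ insert a (crossSet (σ * Equiv.swap a b)) := by
  intro x hx
  rcases eq_or_ne x a with rfl | hxa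
  · exact Finset.mem_insert_self _ _
  · apply Finset.mem_insert_of_mem
    obtain ⟨j, hj, hxj⟩ := mem_crossSet.mp hx
    refine mem_crossSet.mpr ⟨Equiv.swap a b j, ?_, ?_⟩
    · rw [Equiv.swap_apply_def]
      rw [Fin.le_def] at *
      have hxa' : (x : ℕ) ≠ (a : ℕ) := fun h => hxa (Fin.ext h)
      split_ifs with h1 h2
      · rw [Fin.ext_iff] at h1; omega
      · rw [Fin.ext_iff] at h2; omega
      · omega
    · simpa [Equiv.Perm.mul_apply, Equiv.swap_apply_self] using hxj

lemma crossCard_le {σ : Equiv.Perm (Fin n)} {a b : Fin n} (hab : (a : ℕ) + 1 = (b : ℕ)) :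
    (crossSet σ).card ≤ (crossSet (σ * Equiv.swap a b)).card + 1 := by
  calc (crossSet σ).card ≤ (insert a (crossSet (σ * Equiv.swap a b))).card :=
        Finset.card_le_card (crossSet_subset hab)
    _ ≤ _ := Finset.card_insert_le _ _

lemma crossCard_le_length (l : List (Equiv.Perm (Fin n)))
    (hst : ∀ τ ∈ l, IsSimpleTransposition τ) : (crossSet l.prod).card ≤ l.length := by
  induction l using List.reverseRecOn with
  | nil => simp [crossSet_one]
  | append_singleton l τ ih =>
    obtain ⟨i, hi, rfl⟩ := hst τ (by simp)
    have hab : ((⟨i, Nat.lt_of_succ_lt hi⟩ : Fin n) : ℕ) + 1 = ((⟨i + 1, hi⟩ : Fin n) : ℕ) := rfl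
    have h1 := crossCard_le (σ := l.prod * Equiv.swap ⟨i, Nat.lt_of_succ_lt hi⟩ ⟨i + 1, hi⟩) hab
    rw [mul_assoc, Equiv.swap_mul_self, mul_one] at h1
    have h2 := ih (fun τ hτ => hst τ (List.mem_append_left _ hτ))
    rw [List.prod_append, List.prod_singleton, List.length_append]
    simp only [List.length_singleton]
    omega

lemma crossCard_le_invCount (σ : Equiv.Perm (Fin n)) :
    (crossSet σ).card ≤ invCount σ := by
  obtain ⟨l, hst, hlen, rfl⟩ := exists_word (invCount σ) σ rfl
  calc (crossSet l.prod).card ≤ l.length := crossCard_le_length l hst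
    _ = _ := hlen

def KeepsLow (a : Fin n) (π : Equiv.Perm (Fin n)) : Prop := ∀ x : Fin n, π x ≤ a ↔ x ≤ a

lemma keepsLow_prod (a : Fin n) (l : List (Equiv.Perm (Fin n)))
    (h : ∀ τ ∈ l, KeepsLow a τ) : KeepsLow a l.prod := by
  induction l with
  | nil => intro x; rfl
  | cons τ l ih =>
    intro x
    rw [List.prod_cons, Equiv.Perm.mul_apply]
    exact (h τ (by simp) _).trans (ih (fun τ' h' => h τ' (by simp [h'])) x)

lemma simple_index_eq {i j : ℕ} (hi : i + 1 < n) (hj : j + 1 < n)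
    (heq : Equiv.swap (⟨i, Nat.lt_of_succ_lt hi⟩ : Fin n) ⟨i + 1, hi⟩ =
      Equiv.swap ⟨j, Nat.lt_of_succ_lt hj⟩ ⟨j + 1, hj⟩) : i = j := by
  have h1 := congrArg (fun π : Equiv.Perm (Fin n) => π ⟨i, Nat.lt_of_succ_lt hi⟩) heq
  simp only [Equiv.swap_apply_left, Equiv.swap_apply_def] at h1
  split_ifs at h1 <;> simp only [Fin.ext_iff] at * <;> omega

lemma keepsLow_swap {i j : ℕ} (hj : j + 1 < n) (hij : j ≠ i) (hi : i < n) :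
    KeepsLow (⟨i, hi⟩ : Fin n) (Equiv.swap ⟨j, Nat.lt_of_succ_lt hj⟩ ⟨j + 1, hj⟩) := by
  intro x
  rw [Equiv.swap_apply_def]
  rw [Fin.le_def, Fin.le_def]
  split_ifs with h1 h2
  · rw [Fin.ext_iff] at h1; simp only [] at *; omega
  · rw [Fin.ext_iff] at h2; simp only [] at *; omega
  · rfl

lemma mem_crossSet_of_mem_list (l : List (Equiv.Perm (Fin n))) (hnd : l.Nodup)
    (hst : ∀ τ ∈ l, IsSimpleTransposition τ) {i : ℕ} (hi : i + 1 < n)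
    (hmem : Equiv.swap (⟨i, Nat.lt_of_succ_lt hi⟩ : Fin n) ⟨i + 1, hi⟩ ∈ l) :
    (⟨i, Nat.lt_of_succ_lt hi⟩ : Fin n) ∈ crossSet l.prod := by
  set a : Fin n := ⟨i, Nat.lt_of_succ_lt hi⟩ with ha
  set b : Fin n := ⟨i + 1, hi⟩ with hb
  set s := Equiv.swap a b with hs
  obtain ⟨l₁, l₂, rfl⟩ := List.append_of_mem hmem
  have hnotmem : s ∉ l₁ ∧ s ∉ l₂ := by
    rw [List.nodup_append'] at hnd
    refine ⟨fun hc => hnd.2.2 hc (by simp), (List.nodup_cons.mp hnd.2.1).1⟩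
  have hkeep : ∀ τ ∈ l₁ ++ l₂, KeepsLow a τ := by
    intro τ hτ
    obtain ⟨j, hj, rfl⟩ := hst τ (by
      rcases List.mem_append.mp hτ with h | h
      · exact List.mem_append_left _ h
      · exact List.mem_append_right _ (by simp [h]))
    have hji : j ≠ i := by
      intro hc
      subst hc
      rcases List.mem_append.mp hτ with h | h
      · exact hnotmem.1 h
      · exact hnotmem.2 h
    exact keepsLow_swap hj hji _
  have hA : KeepsLow a l₁.prod :=
    keepsLow_prod a l₁ (fun τ h => hkeep τ (List.mem_append_left _ h))
  have hB : KeepsLow a l₂.prod :=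
    keepsLow_prod a l₂ (fun τ h => hkeep τ (List.mem_append_right _ h))
  rw [mem_crossSet]
  refine ⟨(l₂.prod)⁻¹ a, ?_, ?_⟩
  · rw [← hB ((l₂.prod)⁻¹ a)]
    rw [Equiv.Perm.inv_def, Equiv.apply_symm_apply]
  · have hprod : (l₁ ++ s :: l₂).prod = l₁.prod * (s * l₂.prod) := by
      rw [List.prod_append, List.prod_cons]
    rw [hprod]
    simp only [Equiv.Perm.mul_apply, Equiv.Perm.inv_def, Equiv.apply_symm_apply]
    rw [hs, Equiv.swap_apply_left]
    have : ¬ (l₁.prod b ≤ a) := by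
      rw [hA b]
      rw [Fin.le_def]
      simp [ha, hb]
    exact lt_of_not_ge (fun hc => this hc)

lemma length_le_crossCard (l : List (Equiv.Perm (Fin n))) (hnd : l.Nodup)
    (hst : ∀ τ ∈ l, IsSimpleTransposition τ) :
    l.length ≤ (crossSet l.prod).card := by
  classical
  set S : Finset (Fin n) :=
    Finset.univ.filter
      (fun a : Fin n => ∃ h : (a : ℕ) + 1 < n, Equiv.swap a ⟨(a : ℕ) + 1, h⟩ ∈ l) with hS
  have hmemS : ∀ a : Fin n, a ∈ S ↔
      ∃ h : (a : ℕ) + 1 < n, Equiv.swap a ⟨(a : ℕ) + 1, h⟩ ∈ l := by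
    intro a; simp [hS]
  have hsub : S ⊆ crossSet l.prod := by
    intro a ha
    obtain ⟨h, hmem⟩ := (hmemS a).mp ha
    exact mem_crossSet_of_mem_list l hnd hst h hmem
  have hcard : S.card = l.toFinset.card := by
    refine Finset.card_bij
      (fun a ha => Equiv.swap a ⟨(a : ℕ) + 1, ((hmemS a).mp ha).choose⟩) ?_ ?_ ?_
    · intro a ha
      rw [List.mem_toFinset]
      exact ((hmemS a).mp ha).choose_spec
    · intro a₁ ha₁ a₂ ha₂ heq
      exact Fin.ext (simple_index_eq ((hmemS a₁).mp ha₁).choose ((hmemS a₂).mp ha₂).choose heq)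
    · intro τ hτ
      obtain ⟨j, hj, rfl⟩ := hst τ (List.mem_toFinset.mp hτ)
      refine ⟨⟨j, Nat.lt_of_succ_lt hj⟩, (hmemS _).mpr ⟨hj, List.mem_toFinset.mp hτ⟩, rfl⟩
  calc l.length = l.toFinset.card := (List.toFinset_card_of_nodup hnd).symm
    _ = S.card := hcard.symm
    _ ≤ _ := Finset.card_le_card hsub

lemma invCount_le_length (l : List (Equiv.Perm (Fin n)))
    (hst : ∀ τ ∈ l, IsSimpleTransposition τ) : invCount l.prod ≤ l.length := by
  induction l using List.reverseRecOn with
  | nil =>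
    simp only [List.prod_nil, List.length_nil, Nat.le_zero]
    rw [invCount_def, Finset.card_eq_zero]
    ext p
    simp only [mem_invSet, Finset.notMem_empty, iff_false, not_and, Equiv.Perm.one_apply]
    intro h1
    exact not_lt.mpr h1.le
  | append_singleton l τ ih =>
    obtain ⟨i, hi, rfl⟩ := hst τ (by simp)
    have hab : ((⟨i, Nat.lt_of_succ_lt hi⟩ : Fin n) : ℕ) + 1 = ((⟨i + 1, hi⟩ : Fin n) : ℕ) := rfl
    have h1 := invCount_mul_swap_le l.prod hab
    have h2 := ih (fun τ hτ => hst τ (List.mem_append_left _ hτ))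
    rw [List.prod_append, List.prod_singleton, List.length_append]
    simp only [List.length_singleton]
    omega

end STAux

/-- If σ is the product of a list of k pairwise distinct simple transpositions,
then ℓ(σ) = k: any such expression is a reduced word. -/
theorem invCount_eq_of_prod_distinct_simple_transpositions (n k : ℕ)
    (σ : Equiv.Perm (Fin n)) (l : List (Equiv.Perm (Fin n)))
    (hlen : l.length = k) (hnd : l.Nodup)
    (hst : ∀ τ ∈ l, IsSimpleTransposition τ) (hσ : σ = l.prod) :
    invCount σ = k := by
  subst hσ hlen
  have h1 := STAux.invCount_le_length l hst
  have h2 := STAux.length_le_crossCard l hnd hst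
  have h3 := STAux.crossCard_le_invCount l.prod
  omega
end

section
/- Let σ be a permutation of {1,…,n} and write σ = σ_1 ⋯ σ_r as a product of pairwise disjoint cycles. Then σ is a product of pairwise distinct simple transpositions if and only if each cycle σ_i (for i = 1,…,r) is a product of pairwise distinct simple transpositions. -/
open Equiv Equiv.Perm

/-- The `i`-th simple transposition (or `1` if out of range). -/
def sT (n : ℕ) (i : ℕ) : Equiv.Perm (Fin n) :=
  if h : i + 1 < n then Equiv.swap ⟨i, Nat.lt_of_succ_lt h⟩ ⟨i + 1, h⟩ else 1

lemma sT_eq {n i : ℕ} (h : i + 1 < n) :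
    sT n i = Equiv.swap ⟨i, Nat.lt_of_succ_lt h⟩ ⟨i + 1, h⟩ := dif_pos h

lemma sT_isSimple {n i : ℕ} (h : i + 1 < n) : IsSimpleTransposition (sT n i) :=
  ⟨i, h, sT_eq h⟩

lemma isSimple_iff {n : ℕ} {τ : Equiv.Perm (Fin n)} :
    IsSimpleTransposition τ ↔ ∃ i, i + 1 < n ∧ τ = sT n i := by
  constructor
  · rintro ⟨i, h, rfl⟩; exact ⟨i, h, (sT_eq h).symm⟩
  · rintro ⟨i, h, rfl⟩; exact sT_isSimple h

lemma sT_one {n i : ℕ} (h : ¬ i + 1 < n) : sT n i = 1 := dif_neg h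

lemma sT_moves_iff {n i : ℕ} (h : i + 1 < n) (x : Fin n) :
    sT n i x ≠ x ↔ (x : ℕ) = i ∨ (x : ℕ) = i + 1 := by
  rw [sT_eq h]
  constructor
  · intro hx
    by_contra hc
    push_neg at hc
    have h1 : x ≠ ⟨i, Nat.lt_of_succ_lt h⟩ := fun he => hc.1 (by rw [he])
    have h2 : x ≠ ⟨i + 1, h⟩ := fun he => hc.2 (by rw [he])
    exact hx (Equiv.swap_apply_of_ne_of_ne h1 h2)
  · rintro (hx | hx)
    · have : x = ⟨i, Nat.lt_of_succ_lt h⟩ := Fin.ext hx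
      rw [this, Equiv.swap_apply_left]
      intro he; exact absurd (congrArg Fin.val he) (by simp)
    · have : x = ⟨i + 1, h⟩ := Fin.ext hx
      rw [this, Equiv.swap_apply_right]
      intro he; exact absurd (congrArg Fin.val he) (by simp)

lemma sT_inj {n i j : ℕ} (hi : i + 1 < n) (hj : j + 1 < n) (h : sT n i = sT n j) : i = j := by
  by_contra hij
  have h1 : sT n i ⟨i, Nat.lt_of_succ_lt hi⟩ ≠ ⟨i, Nat.lt_of_succ_lt hi⟩ := by
    rw [sT_moves_iff hi]; left; rfl
  rw [h, sT_moves_iff hj] at h1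
  have h2 : sT n j ⟨j, Nat.lt_of_succ_lt hj⟩ ≠ ⟨j, Nat.lt_of_succ_lt hj⟩ := by
    rw [sT_moves_iff hj]; left; rfl
  rw [← h, sT_moves_iff hi] at h2
  simp only [] at h1 h2
  omega

lemma sT_fixes {n i : ℕ} {x : Fin n} (h : (x : ℕ) ≠ i ∧ (x : ℕ) ≠ i + 1) : sT n i x = x := by
  by_cases hv : i + 1 < n
  · by_contra hc
    rcases (sT_moves_iff hv x).mp hc with h1 | h1
    · exact h.1 h1
    · exact h.2 h1
  · rw [sT_one hv]; rfl

lemma sT_comm {n i j : ℕ} (h : i + 2 ≤ j) : Commute (sT n i) (sT n j) := by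
  by_cases hi : i + 1 < n
  · by_cases hj : j + 1 < n
    · apply Equiv.Perm.Disjoint.commute
      intro x
      by_cases hx : (x : ℕ) = i ∨ (x : ℕ) = i + 1
      · right; exact sT_fixes ⟨by omega, by omega⟩
      · left; push_neg at hx; exact sT_fixes hx
    · rw [sT_one hj]; exact Commute.one_right _
  · rw [sT_one hi]; exact Commute.one_left _

/-- Splitting a product of transpositions along a predicate whose parts commute. -/
lemma split_prod {n : ℕ} (p : ℕ → Prop) [DecidablePred p] :
    ∀ M : List ℕ, (∀ i ∈ M, ∀ j ∈ M, p i → ¬ p j → Commute (sT n i) (sT n j)) →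
      (M.map (sT n)).prod =
        ((M.filter (fun i => decide (p i))).map (sT n)).prod *
          ((M.filter (fun i => ! decide (p i))).map (sT n)).prod := by
  intro M
  induction M with
  | nil => simp
  | cons a t ih =>
    intro hcomm
    have ht := ih (fun i hi j hj => hcomm i (List.mem_cons_of_mem a hi) j (List.mem_cons_of_mem a hj))
    by_cases hpa : p a
    · rw [List.filter_cons_of_pos (by simpa using hpa), List.filter_cons_of_neg (by simpa using hpa)]
      simp only [List.map_cons, List.prod_cons]
      rw [ht, mul_assoc]
    · rw [List.filter_cons_of_neg (by simpa using hpa), List.filter_cons_of_pos (by simpa using hpa)]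
      simp only [List.map_cons, List.prod_cons]
      rw [ht]
      have hc : Commute (sT n a) (((t.filter (fun i => decide (p i))).map (sT n)).prod) := by
        apply Commute.list_prod_right
        intro x hx
        obtain ⟨i, hi, rfl⟩ := List.mem_map.mp hx
        have hit : i ∈ t := (List.mem_filter.mp hi).1
        have hpi : p i := by simpa using (List.mem_filter.mp hi).2
        exact (hcomm i (List.mem_cons_of_mem a hit) a (List.mem_cons_self (a := a) (l := t)) hpi hpa).symm
      rw [← mul_assoc, ← mul_assoc, hc.eq]


open Equiv Equiv.Perm

section Extend

variable {α : Type*} [DecidableEq α] [Fintype α]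

/-- Extending a cycle by a swap on the left. -/
lemma extend_left {π : Equiv.Perm α} (hπ : π.IsCycle) {x y : α}
    (hx : π x = x) (hy : π y ≠ y) :
    (Equiv.swap x y * π).IsCycle ∧
      (∀ z, (Equiv.swap x y * π) z ≠ z ↔ z = x ∨ π z ≠ z) := by
  have hxy : x ≠ y := fun h => hy (by rw [← h, hx])
  set τ := Equiv.swap x y * π with hτ
  have htau : ∀ z, τ z = Equiv.swap x y (π z) := fun z => rfl
  have hπnex : ∀ z, π z ≠ z → π z ≠ x := by
    intro z hz h
    have hzx : z = x := π.injective (h.trans hx.symm)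
    rw [hzx, hx] at hz; exact hz rfl
  have hτx : τ x = y := by rw [htau, hx, Equiv.swap_apply_left]
  have hmoves : ∀ z, τ z ≠ z ↔ z = x ∨ π z ≠ z := by
    intro z
    constructor
    · intro h
      by_contra hc
      push_neg at hc
      obtain ⟨h1, h2⟩ := hc
      rw [htau, h2, Equiv.swap_apply_of_ne_of_ne h1 (fun hzy => hy (by rw [← hzy, h2]))] at h
      exact h rfl
    · rintro (rfl | h)
      · rw [hτx]; exact fun h => hxy h.symm
      · by_cases hzy : π z = y
        · rw [htau, hzy, Equiv.swap_apply_right]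
          intro hxz; rw [← hxz] at h; rw [hx] at h; exact h rfl
        · rw [htau, Equiv.swap_apply_of_ne_of_ne (hπnex z h) hzy]; exact h
  refine ⟨⟨x, ?_, ?_⟩, hmoves⟩
  · rw [hτx]; exact fun h => hxy h.symm
  · intro z hz
    rw [hmoves] at hz
    rcases hz with rfl | hz
    · exact SameCycle.refl _ _
    · -- SameCycle τ x z with z ∈ supp π
      have hxy' : τ.SameCycle x y := ⟨1, by simpa using hτx⟩
      have key : ∀ k : ℕ, τ.SameCycle y ((π ^ k) y) := by
        intro k
        induction k with
        | zero => simpa using SameCycle.refl _ _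
        | succ k ih =>
          set w := (π ^ k) y with hw
          have hwmem : π w ≠ w := by
            have : (π ^ k) y ∈ π.support := by
              rw [Equiv.Perm.pow_apply_mem_support, Equiv.Perm.mem_support]; exact hy
            exact Equiv.Perm.mem_support.mp this
          have hstep : (π ^ (k + 1)) y = π w := by
            have h1 : π ^ (k + 1) = π * π ^ k := pow_succ' π k
            rw [h1, Equiv.Perm.mul_apply]
          by_cases hwy : π w = y
          · rw [hstep, hwy]
          · have hτw : τ w = π w := by
              rw [htau, Equiv.swap_apply_of_ne_of_ne (hπnex w hwmem) hwy]
            rw [hstep]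
            exact ih.trans ⟨1, by simpa using hτw⟩
      obtain ⟨k, hk⟩ := hπ.exists_pow_eq hy hz
      exact hxy'.trans (hk ▸ key k)

omit [DecidableEq α] [Fintype α] in
lemma moves_inv_iff (f : Equiv.Perm α) (z : α) : f⁻¹ z ≠ z ↔ f z ≠ z := by
  rw [Ne, Ne, Equiv.Perm.inv_eq_iff_eq, eq_comm]

/-- Extending a cycle by a swap on the right. -/
lemma extend_right {π : Equiv.Perm α} (hπ : π.IsCycle) {x y : α}
    (hx : π x = x) (hy : π y ≠ y) :
    (π * Equiv.swap x y).IsCycle ∧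
      (∀ z, (π * Equiv.swap x y) z ≠ z ↔ z = x ∨ π z ≠ z) := by
  have hx' : π⁻¹ x = x := by rw [Equiv.Perm.inv_eq_iff_eq, hx]
  have hy' : π⁻¹ y ≠ y := (moves_inv_iff π y).mpr hy
  obtain ⟨hc, hm⟩ := extend_left hπ.inv hx' hy'
  have heq : π * Equiv.swap x y = (Equiv.swap x y * π⁻¹)⁻¹ := by
    rw [mul_inv_rev, inv_inv, Equiv.swap_inv]
  constructor
  · rw [heq]; exact hc.inv
  · intro z
    rw [heq, moves_inv_iff, hm z, moves_inv_iff]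

end Extend

/-- A product of the simple transpositions with indices exactly `[a,b]`, each used
once in some order, is a cycle moving exactly the points of `[a, b+1]`. -/
lemma interval_cycle {n : ℕ} (N : ℕ) : ∀ (M : List ℕ) (a b : ℕ), M.length ≤ N → a ≤ b →
    (∀ i ∈ M, i + 1 < n) → M.Nodup → (∀ i, i ∈ M ↔ a ≤ i ∧ i ≤ b) →
    (M.map (sT n)).prod.IsCycle ∧
      ∀ x : Fin n, (M.map (sT n)).prod x ≠ x ↔ a ≤ (x : ℕ) ∧ (x : ℕ) ≤ b + 1 := by
  induction N with
  | zero =>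
    intro M a b hlen hab hv hn hcov
    rw [Nat.le_zero, List.length_eq_zero_iff] at hlen
    exact absurd ((hcov a).mpr ⟨le_rfl, hab⟩) (by simp [hlen])
  | succ N ih =>
    intro M a b hlen hab hv hn hcov
    rcases eq_or_lt_of_le hab with rfl | hab'
    · -- singleton case : M = [a]
      have ha : a ∈ M := (hcov a).mpr ⟨le_rfl, le_rfl⟩
      have hall : ∀ i ∈ M, i = a := fun i hi =>
        le_antisymm ((hcov i).mp hi).2 ((hcov i).mp hi).1
      have hM : M = [a] := by
        cases M with
        | nil => exact absurd ha (by simp)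
        | cons x t =>
          have hx : x = a := hall x (List.mem_cons_self (a := x) (l := t))
          have ht : t = [] := by
            cases t with
            | nil => rfl
            | cons y u =>
              have hy : y = a := hall y (by simp)
              rw [List.nodup_cons] at hn
              exact absurd (show x ∈ y :: u by rw [hx, hy]; simp) hn.1
          rw [hx, ht]
      have hva : a + 1 < n := hv a ha
      rw [hM]
      simp only [List.map_cons, List.map_nil, List.prod_cons, List.prod_nil, mul_one]
      constructor
      · rw [sT_eq hva]
        exact Equiv.Perm.isCycle_swap (by intro h; exact absurd (congrArg Fin.val h) (by simp))
      · intro x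
        rw [sT_moves_iff hva]
        omega
    · -- a < b
      have hb : b ∈ M := (hcov b).mpr ⟨le_of_lt hab', le_rfl⟩
      obtain ⟨M₁, M₂, rfl⟩ := List.append_of_mem hb
      rw [List.nodup_append'] at hn
      obtain ⟨hn1, hn2', hdisj⟩ := hn
      rw [List.nodup_cons] at hn2'
      obtain ⟨hbM2, hn2⟩ := hn2'
      have hbM1 : b ∉ M₁ := fun h => hdisj h (List.mem_cons_self (a := b) (l := M₂))
      have hdisj' : M₁.Disjoint M₂ := fun x hx1 hx2 => hdisj hx1 (List.mem_cons_of_mem b hx2)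
      have hn' : (M₁ ++ M₂).Nodup := List.nodup_append'.mpr ⟨hn1, hn2, hdisj'⟩
      have hmemM : ∀ i, i ∈ M₁ ++ b :: M₂ ↔ i ∈ M₁ ∨ i = b ∨ i ∈ M₂ := by
        intro i; rw [List.mem_append, List.mem_cons]
      have hcov' : ∀ i, i ∈ M₁ ++ M₂ ↔ a ≤ i ∧ i ≤ b - 1 := by
        intro i
        rw [List.mem_append]
        constructor
        · intro h
          have hiM : i ∈ M₁ ++ b :: M₂ := (hmemM i).mpr (by tauto)
          have hib : i ≠ b := by rintro rfl; rcases h with h | h; exacts [hbM1 h, hbM2 h]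
          have := (hcov i).mp hiM
          omega
        · intro h
          have hiM : i ∈ M₁ ++ b :: M₂ := (hcov i).mpr ⟨h.1, by omega⟩
          rcases (hmemM i).mp hiM with h' | h' | h'
          · exact Or.inl h'
          · omega
          · exact Or.inr h'
      have hv' : ∀ i ∈ M₁ ++ M₂, i + 1 < n := fun i hi => by
        apply hv
        rw [List.mem_append] at hi
        exact (hmemM i).mpr (by tauto)
      have hlen' : (M₁ ++ M₂).length ≤ N := by
        have e1 := List.length_append (as := M₁) (bs := b :: M₂)
        have e2 := List.length_append (as := M₁) (bs := M₂)
        have e3 := List.length_cons (a := b) (as := M₂)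
        omega
      obtain ⟨hcyc, hmov⟩ := ih (M₁ ++ M₂) a (b - 1) hlen' (by omega) hv' hn' hcov'
      set π := ((M₁ ++ M₂).map (sT n)).prod with hπ
      have hmovb : ∀ x : Fin n, π x ≠ x ↔ a ≤ (x : ℕ) ∧ (x : ℕ) ≤ b := by
        intro x; rw [hmov x]; omega
      have hvb : b + 1 < n := hv b hb
      set x₀ : Fin n := ⟨b + 1, hvb⟩ with hx₀
      set y₀ : Fin n := ⟨b, Nat.lt_of_succ_lt hvb⟩ with hy₀
      have hfix : π x₀ = x₀ := by
        by_contra hc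
        have := (hmovb x₀).mp hc
        simp only [hx₀] at this
        omega
      have hmove : π y₀ ≠ y₀ := by
        rw [hmovb]
        exact ⟨le_of_lt hab', le_rfl⟩
      have hsTb : sT n b = Equiv.swap x₀ y₀ := by rw [sT_eq hvb, Equiv.swap_comm]
      have hb1 : b - 1 ∈ M₁ ++ M₂ := (hcov' (b - 1)).mpr ⟨by omega, le_rfl⟩
      have hgoal : ∀ (ρ : Equiv.Perm (Fin n)),
          ρ.IsCycle → (∀ z : Fin n, ρ z ≠ z ↔ z = x₀ ∨ π z ≠ z) →
          ((M₁ ++ b :: M₂).map (sT n)).prod = ρ →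
          ((M₁ ++ b :: M₂).map (sT n)).prod.IsCycle ∧
            ∀ x : Fin n, ((M₁ ++ b :: M₂).map (sT n)).prod x ≠ x ↔ a ≤ (x : ℕ) ∧ (x : ℕ) ≤ b + 1 := by
        intro ρ hρc hρm hprod
        rw [hprod]
        refine ⟨hρc, fun x => ?_⟩
        rw [hρm x, hmovb x, Fin.ext_iff]
        simp only [hx₀]
        omega
      rcases List.mem_append.mp hb1 with hcase | hcase
      · -- b - 1 ∈ M₁ : move sT b to the right
        have hcomm : Commute (sT n b) ((M₂.map (sT n)).prod) := by
          apply Commute.list_prod_right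
          intro x hx
          obtain ⟨i, hi, rfl⟩ := List.mem_map.mp hx
          have hiM : i ∈ M₁ ++ b :: M₂ := (hmemM i).mpr (Or.inr (Or.inr hi))
          have hib : i ≠ b := fun h => hbM2 (h ▸ hi)
          have hib1 : i ≠ b - 1 := fun h => hdisj' (h ▸ hcase) hi
          have := (hcov i).mp hiM
          exact (sT_comm (by omega)).symm
        have hprod : ((M₁ ++ b :: M₂).map (sT n)).prod = π * sT n b := by
          rw [hπ]
          simp only [List.map_append, List.prod_append, List.map_cons, List.prod_cons]
          rw [hcomm.eq, ← mul_assoc]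
        obtain ⟨hc1, hm1⟩ := extend_right hcyc hfix hmove
        exact hgoal _ hc1 hm1 (by rw [hprod, hsTb])
      · -- b - 1 ∈ M₂ : move sT b to the left
        have hcomm : Commute ((M₁.map (sT n)).prod) (sT n b) := by
          apply Commute.list_prod_left
          intro x hx
          obtain ⟨i, hi, rfl⟩ := List.mem_map.mp hx
          have hiM : i ∈ M₁ ++ b :: M₂ := (hmemM i).mpr (Or.inl hi)
          have hib : i ≠ b := fun h => hbM1 (h ▸ hi)
          have hib1 : i ≠ b - 1 := fun h => hdisj' hi (h ▸ hcase)
          have := (hcov i).mp hiM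
          exact sT_comm (by omega)
        have hprod : ((M₁ ++ b :: M₂).map (sT n)).prod = sT n b * π := by
          rw [hπ]
          simp only [List.map_append, List.prod_append, List.map_cons, List.prod_cons]
          rw [← mul_assoc, hcomm.eq, mul_assoc]
        obtain ⟨hc1, hm1⟩ := extend_left hcyc hfix hmove
        exact hgoal _ hc1 hm1 (by rw [hprod, hsTb])


lemma fixed_prod {β : Type*} : ∀ (l : List (Equiv.Perm β)) (x : β),
    (∀ τ ∈ l, τ x = x) → l.prod x = x := by
  intro l
  induction l with
  | nil => intro x _; rfl
  | cons τ t ih =>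
    intro x h
    rw [List.prod_cons, Equiv.Perm.mul_apply, ih x (fun τ' h' => h τ' (List.mem_cons_of_mem τ h')),
      h τ (List.mem_cons_self (a := τ) (l := t))]

/-- Main decomposition: a product of distinct simple transpositions is a product of
disjoint cycles, each of which is itself a product of distinct simple transpositions,
and whose supports cover the supports of all the transpositions used. -/
lemma main_decomp {n : ℕ} (N : ℕ) : ∀ M : List ℕ, M.length ≤ N → M.Nodup →
    (∀ i ∈ M, i + 1 < n) →
    ∃ l' : List (Equiv.Perm (Fin n)),
      (∀ τ ∈ l', τ.IsCycle) ∧ l'.Pairwise Equiv.Perm.Disjoint ∧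
      l'.prod = (M.map (sT n)).prod ∧
      (∀ τ ∈ l', IsProdOfDistinctSimpleTranspositions τ) ∧
      (∀ τ ∈ l', ∀ x : Fin n, τ x ≠ x → ∃ i ∈ M, sT n i x ≠ x) ∧
      (∀ i ∈ M, ∀ x : Fin n, sT n i x ≠ x → (M.map (sT n)).prod x ≠ x) := by
  induction N with
  | zero =>
    intro M hlen _ _
    rw [Nat.le_zero, List.length_eq_zero_iff] at hlen
    subst hlen
    exact ⟨[], by simp, by simp, by simp, by simp, by simp, by simp⟩
  | succ N ih =>
    intro M hlen hn hv
    rcases List.eq_nil_or_concat M with rfl | hMne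
    · exact ⟨[], by simp, by simp, by simp, by simp, by simp, by simp⟩
    have hMne' : M ≠ [] := by rcases hMne with ⟨L, b, rfl⟩; simp
    classical
    set I : Finset ℕ := M.toFinset with hI
    have hInon : I.Nonempty := by
      rw [hI]
      rcases List.exists_mem_of_ne_nil M hMne' with ⟨x, hx⟩
      exact ⟨x, List.mem_toFinset.mpr hx⟩
    set a := I.min' hInon with ha
    set Q := I.filter (fun j => Finset.Icc a j ⊆ I) with hQ
    have haQ : a ∈ Q := by
      rw [hQ, Finset.mem_filter]
      refine ⟨I.min'_mem hInon, ?_⟩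
      rw [Finset.Icc_self, Finset.singleton_subset_iff]
      exact I.min'_mem hInon
    set c := Q.max' ⟨a, haQ⟩ with hc
    have hcQ : c ∈ Q := Q.max'_mem ⟨a, haQ⟩
    rw [hQ, Finset.mem_filter] at hcQ
    obtain ⟨hcI, hcIcc⟩ := hcQ
    have hac : a ≤ c := Q.le_max' a haQ
    have hmin : ∀ j ∈ I, a ≤ j := fun j hj => I.min'_le j hj
    have hc1 : c + 1 ∉ I := by
      intro h
      have hQm : c + 1 ∈ Q := by
        rw [hQ, Finset.mem_filter]
        refine ⟨h, fun k hk => ?_⟩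
        rw [Finset.mem_Icc] at hk
        by_cases hkc : k ≤ c
        · exact hcIcc (Finset.mem_Icc.mpr ⟨hk.1, hkc⟩)
        · have : k = c + 1 := by omega
          rw [this]; exact h
      have := Q.le_max' (c + 1) hQm
      omega
    set M₁ := M.filter (fun i => decide (i ≤ c)) with hM₁
    set M₂ := M.filter (fun i => ! decide (i ≤ c)) with hM₂
    have hM1mem : ∀ i, i ∈ M₁ ↔ a ≤ i ∧ i ≤ c := by
      intro i
      rw [hM₁, List.mem_filter]
      constructor
      · rintro ⟨him, hid⟩
        exact ⟨hmin i (List.mem_toFinset.mpr him), by simpa using hid⟩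
      · rintro ⟨h1, h2⟩
        have : i ∈ I := hcIcc (Finset.mem_Icc.mpr ⟨h1, h2⟩)
        exact ⟨List.mem_toFinset.mp this, by simpa using h2⟩
    have hM2mem : ∀ i ∈ M₂, c + 2 ≤ i := by
      intro i hi
      rw [hM₂, List.mem_filter] at hi
      have h1 : ¬ i ≤ c := by simpa using hi.2
      have h2 : i ≠ c + 1 := fun h => hc1 (h ▸ List.mem_toFinset.mpr hi.1)
      omega
    have hM2sub : ∀ i ∈ M₂, i ∈ M := fun i hi => (List.mem_filter.mp hi).1
    have hM1sub : ∀ i ∈ M₁, i ∈ M := fun i hi => (List.mem_filter.mp hi).1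
    have hsplit : (M.map (sT n)).prod = (M₁.map (sT n)).prod * (M₂.map (sT n)).prod := by
      apply split_prod (fun i => i ≤ c) M
      intro i hi j hj hpi hpj
      have hj2 : c + 2 ≤ j := by
        have h2 : j ≠ c + 1 := fun h => hc1 (h ▸ List.mem_toFinset.mpr hj)
        omega
      exact sT_comm (by omega)
    have haM1 : a ∈ M₁ := (hM1mem a).mpr ⟨le_rfl, hac⟩
    have hvM1 : ∀ i ∈ M₁, i + 1 < n := fun i hi => hv i (hM1sub i hi)
    obtain ⟨hπc, hπm⟩ := interval_cycle M₁.length M₁ a c le_rfl hac hvM1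
      (hn.filter _) hM1mem
    set π := (M₁.map (sT n)).prod with hπ
    -- length of M₂
    have hlen2 : M₂.length ≤ N := by
      have hsub : M₂.Sublist M := List.filter_sublist (l := M)
      have hle := hsub.length_le
      have hne : M₂.length ≠ M.length := by
        intro h
        have heq : M₂ = M := hsub.eq_of_length h
        have haM : a ∈ M := hM1sub a haM1
        have haM2 : a ∈ M₂ := by rw [heq]; exact haM
        have h1 := hM2mem a haM2
        have h2 := (hM1mem a).mp haM1
        omega
      omega
    obtain ⟨l₂, hl₂c, hl₂d, hl₂p, hl₂b, hl₂m, hl₂e⟩ := ih M₂ hlen2 (hn.filter _)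
      (fun i hi => hv i (hM2sub i hi))
    have hM2fix : ∀ x : Fin n, (x : ℕ) ≤ c + 1 → (M₂.map (sT n)).prod x = x := by
      intro x hx
      apply fixed_prod
      intro τ hτ
      obtain ⟨i, hi, rfl⟩ := List.mem_map.mp hτ
      have := hM2mem i hi
      exact sT_fixes ⟨by omega, by omega⟩
    have hM2moves : ∀ x : Fin n, (M₂.map (sT n)).prod x ≠ x → c + 2 ≤ (x : ℕ) := by
      intro x hx
      by_contra h
      exact hx (hM2fix x (by omega))
    have hπfix : ∀ x : Fin n, ¬ (a ≤ (x : ℕ) ∧ (x : ℕ) ≤ c + 1) → π x = x := by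
      intro x hx
      by_contra h
      exact hx ((hπm x).mp h)
    have hdisj : ∀ τ ∈ l₂, π.Disjoint τ := by
      intro τ hτ x
      by_cases hπx : π x = x
      · exact Or.inl hπx
      · right
        by_contra hτx
        obtain ⟨i, hi, hsti⟩ := hl₂m τ hτ x hτx
        have hi2 := hM2mem i hi
        rcases (sT_moves_iff (hv i (hM2sub i hi)) x).mp hsti with h | h
        · exact hπx (hπfix x (by omega))
        · exact hπx (hπfix x (by omega))
    clear_value π
    refine ⟨π :: l₂, ?_, ?_, ?_, ?_, ?_, ?_⟩
    · intro τ hτ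
      rcases List.mem_cons.mp hτ with rfl | hτ'
      exacts [hπc, hl₂c τ hτ']
    · rw [List.pairwise_cons]
      exact ⟨hdisj, hl₂d⟩
    · rw [List.prod_cons, hl₂p, hsplit]
    · intro τ hτ
      rcases List.mem_cons.mp hτ with rfl | hτ'
      · refine ⟨M₁.map (sT n), ?_, ?_, by rw [hπ]⟩
        · exact (hn.filter _).map_on (fun x hx y hy h => sT_inj (hvM1 x hx) (hvM1 y hy) h)
        · intro s hs
          obtain ⟨i, hi, rfl⟩ := List.mem_map.mp hs
          exact sT_isSimple (hvM1 i hi)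
      · exact hl₂b τ hτ'
    · intro τ hτ x hx
      rcases List.mem_cons.mp hτ with rfl | hτ'
      · have := (hπm x).mp hx
        by_cases hxc : (x : ℕ) ≤ c
        · refine ⟨(x : ℕ), hM1sub _ ((hM1mem _).mpr ⟨this.1, hxc⟩), ?_⟩
          rw [sT_moves_iff (hv _ (hM1sub _ ((hM1mem _).mpr ⟨this.1, hxc⟩)))]
          exact Or.inl rfl
        · have hxv : (x : ℕ) = c + 1 := by omega
          refine ⟨c, hM1sub _ ((hM1mem _).mpr ⟨hac, le_rfl⟩), ?_⟩
          rw [sT_moves_iff (hv _ (hM1sub _ ((hM1mem _).mpr ⟨hac, le_rfl⟩)))]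
          exact Or.inr hxv
      · obtain ⟨i, hi, hsti⟩ := hl₂m τ hτ' x hx
        exact ⟨i, hM2sub i hi, hsti⟩
    · intro i hiM x hx
      rw [hsplit, Equiv.Perm.mul_apply]
      by_cases hic : i ≤ c
      · -- i ∈ M₁ : x is in [a, c+1] and fixed by the M₂-part
        have hiM1 : i ∈ M₁ := by
          rw [hM₁, List.mem_filter]; exact ⟨hiM, by simpa using hic⟩
        have hia : a ≤ i := ((hM1mem i).mp hiM1).1
        have hxv : (x : ℕ) = i ∨ (x : ℕ) = i + 1 := (sT_moves_iff (hv i hiM) x).mp hx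
        have hfix2 : (M₂.map (sT n)).prod x = x := hM2fix x (by omega)
        rw [hfix2]
        exact (hπm x).mpr ⟨by omega, by omega⟩
      · -- i ∈ M₂
        have hiM2 : i ∈ M₂ := by
          rw [hM₂, List.mem_filter]; exact ⟨hiM, by simpa using hic⟩
        have hmoved : (M₂.map (sT n)).prod x ≠ x := hl₂e i hiM2 x hx
        set y := (M₂.map (sT n)).prod x with hy
        have hymoved : (M₂.map (sT n)).prod y ≠ y := by
          intro h
          exact hmoved (((M₂.map (sT n)).prod).injective (by rw [h, ← hy]))
        have hyv : c + 2 ≤ (y : ℕ) := hM2moves y hymoved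
        have : π y = y := hπfix y (by omega)
        rw [this]
        exact fun h => hmoved (hy ▸ h)

lemma exists_index_list {n : ℕ} : ∀ L : List (Equiv.Perm (Fin n)),
    (∀ s ∈ L, IsSimpleTransposition s) →
    ∃ M : List ℕ, (∀ i ∈ M, i + 1 < n) ∧ M.map (sT n) = L := by
  intro L
  induction L with
  | nil => exact fun _ => ⟨[], by simp, by simp⟩
  | cons s t ih =>
    intro h
    obtain ⟨i, hi, hs⟩ := isSimple_iff.mp (h s (List.mem_cons_self (a := s) (l := t)))
    obtain ⟨M, hv, hmap⟩ := ih (fun x hx => h x (List.mem_cons_of_mem s hx))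
    refine ⟨i :: M, ?_, by simp [hmap, ← hs]⟩
    intro j hj
    rcases List.mem_cons.mp hj with rfl | hj'
    exacts [hi, hv j hj']

lemma boolean_supported {n : ℕ} {σ : Equiv.Perm (Fin n)}
    (h : IsProdOfDistinctSimpleTranspositions σ) :
    ∃ L : List (Equiv.Perm (Fin n)), L.Nodup ∧ (∀ s ∈ L, IsSimpleTransposition s) ∧
      σ = L.prod ∧ ∀ s ∈ L, ∀ x : Fin n, s x ≠ x → σ x ≠ x := by
  obtain ⟨L, hnd, hsimp, rfl⟩ := h
  obtain ⟨M, hv, hmap⟩ := exists_index_list L hsimp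
  subst hmap
  have hnM : M.Nodup := List.Nodup.of_map _ hnd
  obtain ⟨l', _, _, _, _, _, he⟩ := main_decomp M.length M le_rfl hnM hv
  refine ⟨M.map (sT n), hnd, hsimp, rfl, ?_⟩
  intro s hs x hx
  obtain ⟨i, hi, rfl⟩ := List.mem_map.mp hs
  exact he i hi x hx

lemma prod_of_disjoint_boolean {n : ℕ} : ∀ l : List (Equiv.Perm (Fin n)),
    l.Pairwise Equiv.Perm.Disjoint → (∀ τ ∈ l, IsProdOfDistinctSimpleTranspositions τ) →
    IsProdOfDistinctSimpleTranspositions l.prod := by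
  intro l
  induction l with
  | nil => exact fun _ _ => ⟨[], by simp, by simp, by simp⟩
  | cons τ t ih =>
    intro hd hb
    rw [List.pairwise_cons] at hd
    have hdisj : τ.Disjoint t.prod := Equiv.Perm.disjoint_prod_right t hd.1
    obtain ⟨L₁, hn1, hs1, hp1, he1⟩ := boolean_supported (hb τ (List.mem_cons_self (a := τ) (l := t)))
    obtain ⟨L₂, hn2, hs2, hp2, he2⟩ :=
      boolean_supported (ih hd.2 (fun τ' h' => hb τ' (List.mem_cons_of_mem τ h')))
    refine ⟨L₁ ++ L₂, ?_, ?_, ?_⟩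
    · rw [List.nodup_append']
      refine ⟨hn1, hn2, fun s hsa hsb => ?_⟩
      obtain ⟨i, hi, rfl⟩ := isSimple_iff.mp (hs1 s hsa)
      have hmv : sT n i ⟨i, Nat.lt_of_succ_lt hi⟩ ≠ ⟨i, Nat.lt_of_succ_lt hi⟩ :=
        (sT_moves_iff hi _).mpr (Or.inl rfl)
      have h1 := he1 _ hsa _ hmv
      have h2 := he2 _ hsb _ hmv
      rcases hdisj ⟨i, Nat.lt_of_succ_lt hi⟩ with hcase | hcase
      exacts [h1 hcase, h2 hcase]
    · intro s hs
      rcases List.mem_append.mp hs with hcase | hcase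
      exacts [hs1 s hcase, hs2 s hcase]
    · rw [List.prod_append, List.prod_cons, ← hp1, ← hp2]

/-- If σ = σ₁ ⋯ σ_r is a product of pairwise disjoint cycles, then σ is a product
of pairwise distinct simple transpositions if and only if each σᵢ is. -/
theorem prodDistinctSimpleTranspositions_iff_of_disjoint_cycles (n : ℕ)
    (σ : Equiv.Perm (Fin n)) (l : List (Equiv.Perm (Fin n)))
    (hc : ∀ τ ∈ l, τ.IsCycle) (hd : l.Pairwise Equiv.Perm.Disjoint)
    (hσ : σ = l.prod) :
    IsProdOfDistinctSimpleTranspositions σ ↔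
      ∀ τ ∈ l, IsProdOfDistinctSimpleTranspositions τ := by
  constructor
  · intro h
    obtain ⟨L, hnd, hsimp, hLp⟩ := h
    obtain ⟨M, hv, hmap⟩ := exists_index_list L hsimp
    subst hmap
    have hnM : M.Nodup := List.Nodup.of_map _ hnd
    obtain ⟨l', hc', hd', hp', hb', _, _⟩ := main_decomp M.length M le_rfl hnM hv
    have hprods : l.prod = l'.prod := by rw [hp', ← hLp, hσ]
    have hperm : l.Perm l' :=
      Equiv.Perm.list_cycles_perm_list_cycles hprods hc hc' hd hd'
    intro τ hτ
    exact hb' τ (hperm.mem_iff.mp hτ)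
  · intro h
    rw [hσ]
    exact prod_of_disjoint_boolean l hd h
end
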